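/- arXiv:1106.2561 — 3 statements merged into one kernel-verified Lean document; each statement's English description precedes it below -/
import Mathlib

section
/- Let n∈ℕ, s∈(0,1), p∈(0,n/s) and σ > np/(n−ps). Define u on ℝⁿ by u(x) := |x|^{−n/σ} for 0<|x|<1 and u(x) := 1 for |x|≥1. Then for every q∈(0,∞], u belongs to the homogeneous Besov space Ḃ^s_{p,q}(ℝⁿ), but u is not locally σ-integrable: ∫_{B(0,1)} |u(x)|^σ dx = ∞. -/
open MeasureTheory Metric Set ENNReal NNReal

noncomputable section

variable {X : Type*} [MetricSpace X] [MeasurableSpace X] [BorelSpace X]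

/-- The doubling property with constant `C₁` and exponent `n`:
`μ(B(x, L r)) ≤ C₁ L^n μ(B(x, r))` for all `x`, `r > 0`, `L > 1`. -/
def IsDoubling (μ : Measure X) (C₁ n : ℝ) : Prop :=
  ∀ (x : X) (r L : ℝ), 0 < r → 1 < L →
    μ (ball x (L * r)) ≤ ENNReal.ofReal (C₁ * L ^ n) * μ (ball x r)

/-- Every ball has finite positive measure. -/
def BallsPosFinite (μ : Measure X) : Prop :=
  ∀ (x : X) (r : ℝ), 0 < r → 0 < μ (ball x r) ∧ μ (ball x r) < ∞

/-- `u ∈ L^p_loc(X)` for `p ∈ (0,∞]`: `u` is `p`-integrable on every ball. -/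
def MemLocLp (μ : Measure X) (u : X → ℝ) (p : ℝ≥0∞) : Prop :=
  ∀ (x : X) (r : ℝ), 0 < r → MemLp u p (μ.restrict (ball x r))

/-- `u ∈ L^σ_loc(X)` for a real exponent `σ ∈ (0,∞)`. -/
def MemLocLsigma (μ : Measure X) (u : X → ℝ) (σ : ℝ) : Prop :=
  ∀ (x : X) (r : ℝ), 0 < r → ∫⁻ y in ball x r, ENNReal.ofReal |u y| ^ σ ∂μ < ∞

/-- `(∫₀^∞ (F t)^q dt/t)^{1/q}`, with the usual modification when `q = ∞`. -/
def timeNorm (q : ℝ≥0∞) (F : ℝ → ℝ≥0∞) : ℝ≥0∞ :=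
  if q = ∞ then ⨆ t ∈ Ioi (0 : ℝ), F t
  else (∫⁻ t in Ioi (0 : ℝ), F t ^ q.toReal * ENNReal.ofReal (1 / t)) ^ (1 / q.toReal)

/-- `(Σ_{k ∈ ℤ} (F k)^q)^{1/q}`, with the usual modification when `q = ∞`. -/
def seqNorm (q : ℝ≥0∞) (F : ℤ → ℝ≥0∞) : ℝ≥0∞ :=
  if q = ∞ then ⨆ k, F k
  else (∑' k, F k ^ q.toReal) ^ (1 / q.toReal)

/-- The `L^p` (quasi-)norm of an `ℝ≥0∞`-valued function, `p ∈ (0,∞]`. -/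
def lpNormE (μ : Measure X) (f : X → ℝ≥0∞) (p : ℝ≥0∞) : ℝ≥0∞ :=
  if p = ∞ then essSup f μ
  else (∫⁻ x, f x ^ p.toReal ∂μ) ^ (1 / p.toReal)

/-- `(∫_X ⨍_{B(x,t)} |u(x)-u(y)|^p dμ(y) dμ(x))^{1/p}`, with the usual modification
when `p = ∞`. -/
def besovKernel (μ : Measure X) (p : ℝ≥0∞) (u : X → ℝ) (t : ℝ) : ℝ≥0∞ :=
  if p = ∞ then
    essSup (fun x => essSup (fun y => ENNReal.ofReal |u x - u y|) (μ.restrict (ball x t))) μ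
  else
    (∫⁻ x, (⨍⁻ y in ball x t, ENNReal.ofReal |u x - u y| ^ p.toReal ∂μ) ∂μ) ^ (1 / p.toReal)

/-- The homogeneous Besov (quasi-)norm `‖u‖_{Ḃ^s_{p,q}(X)}`. -/
def besovNorm (μ : Measure X) (s : ℝ) (p q : ℝ≥0∞) (u : X → ℝ) : ℝ≥0∞ :=
  timeNorm q (fun t => ENNReal.ofReal t ^ (-s) * besovKernel μ p u t)

/-- Membership in the homogeneous Besov space `Ḃ^s_{p,q}(X)`. -/
def MemBesov (μ : Measure X) (s : ℝ) (p q : ℝ≥0∞) (u : X → ℝ) : Prop :=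
  MemLocLp μ u p ∧ besovNorm μ s p q u < ∞

/-- `C^{s,σ}_t(u)(x) = t^{-s} (⨍_{B(x,t)} |u(x)-u(y)|^σ dμ(y))^{1/σ}`. -/
def CFun (μ : Measure X) (s σ : ℝ) (u : X → ℝ) (t : ℝ) (x : X) : ℝ≥0∞ :=
  ENNReal.ofReal t ^ (-s) *
    (⨍⁻ y in ball x t, ENNReal.ofReal |u x - u y| ^ σ ∂μ) ^ (1 / σ)

/-- `A^{s,σ}_t(u)(x) = t^{-s} (⨍_{B(x,t)} |u(y)-u_{B(x,t)}|^σ dμ(y))^{1/σ}`. -/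
def AFun (μ : Measure X) (s σ : ℝ) (u : X → ℝ) (t : ℝ) (x : X) : ℝ≥0∞ :=
  ENNReal.ofReal t ^ (-s) *
    (⨍⁻ y in ball x t,
      ENNReal.ofReal |u y - ⨍ z in ball x t, u z ∂μ| ^ σ ∂μ) ^ (1 / σ)

/-- `I^{s,σ}_t(u)(x) = t^{-s} (inf_c ⨍_{B(x,t)} |u(y)-c|^σ dμ(y))^{1/σ}`. -/
def IFun (μ : Measure X) (s σ : ℝ) (u : X → ℝ) (t : ℝ) (x : X) : ℝ≥0∞ :=
  ENNReal.ofReal t ^ (-s) *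
    (⨅ c : ℝ, ⨍⁻ y in ball x t, ENNReal.ofReal |u y - c| ^ σ ∂μ) ^ (1 / σ)

/-- `S^{s,ε,σ}_t(u)(x) = t^{ε-s} sup_{0<r≤t} r^{-ε} (inf_c ⨍_{B(x,r)} |u(y)-c|^σ dμ(y))^{1/σ}`. -/
def SFun (μ : Measure X) (s ε σ : ℝ) (u : X → ℝ) (t : ℝ) (x : X) : ℝ≥0∞ :=
  ENNReal.ofReal t ^ (ε - s) *
    ⨆ r ∈ Ioc (0 : ℝ) t,
      ENNReal.ofReal r ^ (-ε) *
        (⨅ c : ℝ, ⨍⁻ y in ball x r, ENNReal.ofReal |u y - c| ^ σ ∂μ) ^ (1 / σ)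

/-- The (quasi-)norm of the Besov-type space `EḂ_{p,q}(X)` associated with a family of
functionals `E_t`. -/
def eBesovNorm (μ : Measure X) (p q : ℝ≥0∞) (E : ℝ → X → ℝ≥0∞) : ℝ≥0∞ :=
  timeNorm q (fun t => lpNormE μ (E t) p)

/-- The critical exponent `p_*(s) = np/(n-ps)` if `p < n/s`, and `∞` otherwise,
for `p ∈ (0,∞]`. -/
def pStar (n : ℝ) (p : ℝ≥0∞) (s : ℝ) : ℝ≥0∞ :=
  if p < ENNReal.ofReal (n / s) then ENNReal.ofReal (n * p.toReal / (n - p.toReal * s)) else ∞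

/-- `⃗g = {g_k}_{k ∈ ℤ}` is a fractional `s`-Hajłasz gradient of `u`. -/
def IsFracHajlaszGrad (μ : Measure X) (s : ℝ) (u : X → ℝ) (g : ℤ → X → ℝ≥0∞) : Prop :=
  (∀ k, Measurable (g k)) ∧
  ∃ E : Set X, μ E = 0 ∧
    ∀ (k : ℤ) (x y : X), x ∉ E → y ∉ E →
      2 ^ (-(k : ℝ) - 1) ≤ dist x y → dist x y < 2 ^ (-(k : ℝ)) →
      ENNReal.ofReal |u x - u y| ≤ ENNReal.ofReal (dist x y ^ s) * (g k x + g k y)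

/-- The Hajłasz–Besov (quasi-)norm `‖u‖_{Ṅ^s_{p,q}(X)}`. -/
def hajlaszBesovNorm (μ : Measure X) (s : ℝ) (p q : ℝ≥0∞) (u : X → ℝ) : ℝ≥0∞ :=
  ⨅ g ∈ {g : ℤ → X → ℝ≥0∞ | IsFracHajlaszGrad μ s u g},
    seqNorm q (fun k => lpNormE μ (g k) p)

/-- `g` is an `s`-gradient of `u`. -/
def IsSGrad (μ : Measure X) (s : ℝ) (u : X → ℝ) (g : X → ℝ≥0∞) : Prop :=
  Measurable g ∧
  ∃ E : Set X, μ E = 0 ∧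
    ∀ x y : X, x ∉ E → y ∉ E →
      ENNReal.ofReal |u x - u y| ≤ ENNReal.ofReal (dist x y ^ s) * (g x + g y)

/-- The Hajłasz–Sobolev (quasi-)norm `‖u‖_{Ṁ^{s,p}(X)}`. -/
def hajlaszSobolevNorm (μ : Measure X) (s : ℝ) (p : ℝ≥0∞) (u : X → ℝ) : ℝ≥0∞ :=
  ⨅ g ∈ {g : X → ℝ≥0∞ | IsSGrad μ s u g}, lpNormE μ g p

/-- The Hajłasz–Triebel–Lizorkin (quasi-)norm `‖u‖_{Ṁ^s_{p,q}(X)}`. -/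
def hajlaszTLNorm (μ : Measure X) (s : ℝ) (p q : ℝ≥0∞) (u : X → ℝ) : ℝ≥0∞ :=
  ⨅ g ∈ {g : ℤ → X → ℝ≥0∞ | IsFracHajlaszGrad μ s u g},
    if p = ∞ ∧ q ≠ ∞ then
      ⨆ (k : ℤ) (x : X),
        (∑' j : {j : ℤ // k ≤ j},
            ⨍⁻ y in ball x (2 ^ (-(k : ℝ))), g j.1 y ^ q.toReal ∂μ) ^ (1 / q.toReal)
    else lpNormE μ (fun x => seqNorm q (fun k => g k x)) p

/-- The (quasi-)norm of the Triebel–Lizorkin-type space `EḞ_{p,q}(X)` associated with a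
family of functionals `E_t`. -/
def eTLNorm (μ : Measure X) (p q : ℝ≥0∞) (E : ℝ → X → ℝ≥0∞) : ℝ≥0∞ :=
  if p = ∞ then
    if q = ∞ then eBesovNorm μ ∞ ∞ E
    else
      ⨆ (x : X) (r : ℝ) (_ : 0 < r),
        (∫⁻ t in Ioc (0 : ℝ) r,
            (⨍⁻ y in ball x r, E t y ^ q.toReal ∂μ) * ENNReal.ofReal (1 / t)) ^ (1 / q.toReal)
  else lpNormE μ (fun x => timeNorm q (fun t => E t x)) p

/-- `inf_c (⨍_{B(x,r)} |u(y)-c|^e dμ(y))^{1/e}` for `e ∈ (0,∞]`, with the usual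
modification when `e = ∞`. -/
def infLpAvg (μ : Measure X) (u : X → ℝ) (x : X) (r : ℝ) (e : ℝ≥0∞) : ℝ≥0∞ :=
  ⨅ c : ℝ,
    if e = ∞ then essSup (fun y => ENNReal.ofReal |u y - c|) (μ.restrict (ball x r))
    else (⨍⁻ y in ball x r, ENNReal.ofReal |u y - c| ^ e.toReal ∂μ) ^ (1 / e.toReal)

/-- The Hardy–Littlewood maximal function of an `ℝ≥0∞`-valued function. -/
def maximalFn (μ : Measure X) (f : X → ℝ≥0∞) (x : X) : ℝ≥0∞ :=
  ⨆ t ∈ Ioi (0 : ℝ), ⨍⁻ y in ball x t, f y ∂μ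

/-- `M_δ(f) = (M(f^δ))^{1/δ}`. -/
def maximalDelta (μ : Measure X) (δ : ℝ) (f : X → ℝ≥0∞) (x : X) : ℝ≥0∞ :=
  maximalFn μ (fun y => f y ^ δ) x ^ (1 / δ)

/-- The median value `m_u(B)` of `u` on a set `B`. -/
def medianVal (μ : Measure X) (u : X → ℝ) (B : Set X) : ℝ :=
  sSup {a : ℝ | μ ({x ∈ B | u x < a}) ≤ μ B / 2}

/-- The fractional sharp maximal function
`u^{♯,s}_σ(x) = sup_{t>0} t^{-s} (inf_c ⨍_{B(x,t)} |u(z)-c|^σ dμ(z))^{1/σ}`. -/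
def sharpMaxSigma (μ : Measure X) (s σ : ℝ) (u : X → ℝ) (x : X) : ℝ≥0∞ :=
  ⨆ t ∈ Ioi (0 : ℝ),
    ENNReal.ofReal t ^ (-s) *
      (⨅ c : ℝ, ⨍⁻ z in ball x t, ENNReal.ofReal |u z - c| ^ σ ∂μ) ^ (1 / σ)

/-- The fractional sharp maximal function
`u^{♯,s}(x) = sup_{t>0} t^{-s} ⨍_{B(x,t)} |u(z)-u_{B(x,t)}| dμ(z)`. -/
def sharpMax (μ : Measure X) (s : ℝ) (u : X → ℝ) (x : X) : ℝ≥0∞ :=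
  ⨆ t ∈ Ioi (0 : ℝ),
    ENNReal.ofReal t ^ (-s) *
      ⨍⁻ z in ball x t, ENNReal.ofReal |u z - ⨍ w in ball x t, u w ∂μ| ∂μ



lemma pow_geom_ineq : ∀ (N : ℕ) (r : ℝ), 0 ≤ r → r ≤ 1 → 1 - r ^ N ≤ N * (1 - r) := by
  intro N
  induction N with
  | zero => intro r h0 h1; simp
  | succ N ih =>
    intro r h0 h1
    have h2 := ih r h0 h1
    have h3 : r ^ N ≤ 1 := pow_le_one₀ h0 h1
    have h4 : r * (1 - r ^ N) ≤ 1 - r ^ N := by nlinarith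
    have h5 : 1 - r ^ (N + 1) = (1 - r) + r * (1 - r ^ N) := by ring
    rw [h5]
    push_cast
    nlinarith

lemma rpow_neg_anti {a b β : ℝ} (ha : 0 < a) (hab : a ≤ b) (hβ : 0 ≤ β) :
    b ^ (-β) ≤ a ^ (-β) := by
  rw [Real.rpow_neg (ha.trans_le hab).le, Real.rpow_neg ha.le]
  exact inv_anti₀ (Real.rpow_pos_of_pos ha β) (Real.rpow_le_rpow ha.le hab hβ)

lemma one_sub_rpow_le {r α : ℝ} (h0 : 0 < r) (h1 : r ≤ 1) (hα : 0 ≤ α) :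
    1 - r ^ α ≤ ((⌈α⌉₊ : ℝ) + 1) * (1 - r) := by
  have h2 : r ^ (⌈α⌉₊ : ℝ) ≤ r ^ α :=
    Real.rpow_le_rpow_of_exponent_ge h0 h1 (Nat.le_ceil α)
  rw [Real.rpow_natCast] at h2
  have h3 := pow_geom_ineq ⌈α⌉₊ r h0.le h1
  nlinarith

lemma vclaim {α s' : ℝ} (hα : 0 < α) (hs'0 : 0 < s') (hs'1 : s' ≤ 1) {a b h : ℝ}
    (ha : 0 ≤ a) (hab : a ≤ b) (hba : b ≤ a + h) (hh1 : h ≤ 1) :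
    |(if a < 1 then a ^ (-α) else 1) - (if b < 1 then b ^ (-α) else 1)| ≤
      ((⌈α⌉₊ : ℝ) + 1) * h ^ s' * (a ^ (-(α + s')) + b ^ (-(α + s'))) := by
  set C : ℝ := (⌈α⌉₊ : ℝ) + 1 with hC
  have hC1 : (1:ℝ) ≤ C := le_add_of_nonneg_left (Nat.cast_nonneg _)
  have hh0 : 0 ≤ h := by linarith
  have hγ : 0 < α + s' := by linarith
  by_cases ha0 : a = 0
  · subst ha0
    rw [if_pos (by norm_num : (0:ℝ) < 1), Real.zero_rpow (by linarith : -α ≠ 0),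
      Real.zero_rpow (by linarith : -(α + s') ≠ 0), zero_sub, abs_neg, zero_add]
    have hbh : b ≤ h := by linarith
    by_cases hb1 : b < 1
    · by_cases hb0 : b = 0
      · subst hb0
        rw [if_pos (by norm_num : (0:ℝ) < 1), Real.zero_rpow (by linarith : -α ≠ 0), abs_zero]
        positivity
      · have hb0' : 0 < b := lt_of_le_of_ne hab (Ne.symm hb0)
        rw [if_pos hb1, abs_of_nonneg (Real.rpow_nonneg hb0'.le _)]
        have key : b ^ (-α) = b ^ s' * b ^ (-(α + s')) := by
          rw [← Real.rpow_add hb0']; ring_nf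
        rw [key]
        have h1 : b ^ s' ≤ h ^ s' := Real.rpow_le_rpow hb0'.le hbh hs'0.le
        have h2 : (0:ℝ) ≤ b ^ (-(α + s')) := Real.rpow_nonneg hb0'.le _
        have h3 : (0:ℝ) ≤ h ^ s' := Real.rpow_nonneg hh0 _
        calc b ^ s' * b ^ (-(α + s')) ≤ h ^ s' * b ^ (-(α + s')) :=
              mul_le_mul_of_nonneg_right h1 h2
          _ = 1 * (h ^ s' * b ^ (-(α + s'))) := by ring
          _ ≤ C * (h ^ s' * b ^ (-(α + s'))) :=
              mul_le_mul_of_nonneg_right hC1 (mul_nonneg h3 h2)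
          _ = C * h ^ s' * b ^ (-(α + s')) := by ring
    · rw [if_neg hb1]
      push_neg at hb1
      have hh : h = 1 := le_antisymm hh1 (le_trans hb1 hbh)
      have hb : b = 1 := le_antisymm (by linarith) hb1
      rw [hh, hb, Real.one_rpow, Real.one_rpow, abs_one, mul_one]
      linarith
  · have ha0' : 0 < a := lt_of_le_of_ne ha (Ne.symm ha0)
    have hb0' : 0 < b := ha0'.trans_le hab
    by_cases ha1 : a < 1
    · rw [if_pos ha1]
      set m : ℝ := min b 1 with hm
      have hm0 : 0 < m := lt_min hb0' one_pos
      have ham : a ≤ m := le_min hab ha1.le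
      have hm1 : m ≤ 1 := min_le_right _ _
      have hmb : m ≤ b := min_le_left _ _
      have hvb : m ^ (-α) ≤ (if b < 1 then b ^ (-α) else 1) := by
        by_cases hb1 : b < 1
        · rw [if_pos hb1, hm, min_eq_left hb1.le]
      -- m = b
        · rw [if_neg hb1, hm, min_eq_right (not_lt.mp hb1), Real.one_rpow]
      have hvb0 : (0:ℝ) ≤ (if b < 1 then b ^ (-α) else 1) := by
        by_cases hb1 : b < 1
        · rw [if_pos hb1]; positivity
        · rw [if_neg hb1]; norm_num
      have hva_ge : (if b < 1 then b ^ (-α) else 1) ≤ a ^ (-α) := by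
        by_cases hb1 : b < 1
        · rw [if_pos hb1]; exact rpow_neg_anti ha0' hab hα.le
        · rw [if_neg hb1, show (1:ℝ) = 1 ^ (-α) from (Real.one_rpow _).symm]
          exact rpow_neg_anti ha0' ha1.le hα.le
      rw [abs_of_nonneg (by linarith)]
      have hma : m - a ≤ h := by linarith
      have hRHS0 : (0:ℝ) ≤ b ^ (-(α + s')) := Real.rpow_nonneg hb0'.le _
      have hhs : (0:ℝ) ≤ h ^ s' := Real.rpow_nonneg hh0 _
      rcases le_or_gt a h with hcase | hcase
      · have h1 : a ^ (-α) = a ^ s' * a ^ (-(α + s')) := by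
          rw [← Real.rpow_add ha0']; ring_nf
        have h2 : a ^ s' ≤ h ^ s' := Real.rpow_le_rpow ha0'.le hcase hs'0.le
        have h3 : (0:ℝ) ≤ a ^ (-(α + s')) := Real.rpow_nonneg ha0'.le _
        calc a ^ (-α) - (if b < 1 then b ^ (-α) else 1) ≤ a ^ (-α) := by linarith
          _ = a ^ s' * a ^ (-(α + s')) := h1
          _ ≤ h ^ s' * a ^ (-(α + s')) := mul_le_mul_of_nonneg_right h2 h3
          _ = 1 * (h ^ s' * a ^ (-(α + s'))) := by ring
          _ ≤ C * (h ^ s' * a ^ (-(α + s'))) :=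
              mul_le_mul_of_nonneg_right hC1 (mul_nonneg hhs h3)
          _ = C * h ^ s' * a ^ (-(α + s')) := by ring
          _ ≤ C * h ^ s' * (a ^ (-(α + s')) + b ^ (-(α + s'))) := by
              have : (0:ℝ) ≤ C * h ^ s' := mul_nonneg (by linarith) hhs
              nlinarith
      · -- h < a
        have hane : a ^ α ≠ 0 := (Real.rpow_pos_of_pos ha0' α).ne'
        have hmne : m ^ α ≠ 0 := (Real.rpow_pos_of_pos hm0 α).ne'
        have e1 : a ^ (-α) * (a / m) ^ α = m ^ (-α) := by
          rw [Real.div_rpow ha0'.le hm0.le, Real.rpow_neg ha0'.le, Real.rpow_neg hm0.le]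
          field_simp
        have key : a ^ (-α) - m ^ (-α) = a ^ (-α) * (1 - (a / m) ^ α) := by
          rw [mul_sub, mul_one, e1]
        have hr0 : 0 < a / m := div_pos ha0' hm0
        have hr1 : a / m ≤ 1 := (div_le_one hm0).mpr ham
        have hbern : 1 - (a / m) ^ α ≤ C * (1 - a / m) := one_sub_rpow_le hr0 hr1 hα.le
        have hfrac : 1 - a / m ≤ h / a := by
          have e2 : 1 - a / m = (m - a) / m := by field_simp
          rw [e2]
          calc (m - a) / m ≤ h / m := by gcongr
            _ ≤ h / a := by gcongr
        have hha : h / a ≤ (h / a) ^ s' := by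
          rcases eq_or_lt_of_le hh0 with h0 | h0
          · rw [← h0]
            simp [Real.zero_rpow hs'0.ne']
          · have hpos : 0 < h / a := div_pos h0 ha0'
            have hle1 : h / a ≤ 1 := le_of_lt ((div_lt_one ha0').mpr hcase)
            have := Real.rpow_le_rpow_of_exponent_ge hpos hle1 hs'1
            rwa [Real.rpow_one] at this
        have e2 : a ^ (-α) * (h / a) ^ s' = h ^ s' * a ^ (-(α + s')) := by
          rw [Real.div_rpow hh0 ha0'.le, Real.rpow_neg ha0'.le, Real.rpow_neg ha0'.le,
            Real.rpow_add ha0']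
          have hx1 := (Real.rpow_pos_of_pos ha0' α).ne'
          have hx2 := (Real.rpow_pos_of_pos ha0' s').ne'
          field_simp
        have hCpos : (0:ℝ) ≤ C := by linarith
        have haneg : (0:ℝ) ≤ a ^ (-α) := Real.rpow_nonneg ha0'.le _
        calc a ^ (-α) - (if b < 1 then b ^ (-α) else 1) ≤ a ^ (-α) - m ^ (-α) := by linarith
          _ = a ^ (-α) * (1 - (a / m) ^ α) := key
          _ ≤ a ^ (-α) * (C * (h / a)) := by
              apply mul_le_mul_of_nonneg_left _ haneg
              exact hbern.trans (mul_le_mul_of_nonneg_left hfrac hCpos)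
          _ ≤ a ^ (-α) * (C * (h / a) ^ s') := by
              apply mul_le_mul_of_nonneg_left _ haneg
              exact mul_le_mul_of_nonneg_left hha hCpos
          _ = C * (a ^ (-α) * (h / a) ^ s') := by ring
          _ = C * (h ^ s' * a ^ (-(α + s'))) := by rw [e2]
          _ = C * h ^ s' * a ^ (-(α + s')) := by ring
          _ ≤ C * h ^ s' * (a ^ (-(α + s')) + b ^ (-(α + s'))) := by
              have : (0:ℝ) ≤ C * h ^ s' := mul_nonneg hCpos hhs
              nlinarith
    · push_neg at ha1
      rw [if_neg (not_lt.mpr ha1), if_neg (not_lt.mpr (ha1.trans hab)), sub_self, abs_zero]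
      positivity


lemma rpow_neg_anti' {a b β : ℝ} (ha : 0 < a) (hab : a ≤ b) (hβ : 0 ≤ β) :
    b ^ (-β) ≤ a ^ (-β) := by
  rw [Real.rpow_neg (ha.trans_le hab).le, Real.rpow_neg ha.le]
  exact inv_anti₀ (Real.rpow_pos_of_pos ha β) (Real.rpow_le_rpow ha.le hab hβ)

lemma q_eq {R c : ℝ} (hR : 0 < R) (hc : 0 < c) (β : ℝ) (n k : ℕ) :
    (R * c ^ (k + 1)) ^ (-β) * (R * c ^ k) ^ n =
      R ^ ((n : ℝ) - β) * c ^ (-β) * (c ^ ((n : ℝ) - β)) ^ k := by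
  have key : ∀ (j : ℕ) (e : ℝ), (R * c ^ j) ^ e = R ^ e * c ^ ((j : ℝ) * e) := by
    intro j e
    rw [Real.mul_rpow hR.le (pow_pos hc j).le, ← Real.rpow_natCast c j,
      ← Real.rpow_mul hc.le]
  have h2 : ((R * c ^ k) ^ n : ℝ) = (R * c ^ k) ^ ((n : ℕ) : ℝ) := (Real.rpow_natCast _ n).symm
  rw [h2, key (k + 1) (-β), key k ((n : ℕ) : ℝ),
    ← Real.rpow_natCast (c ^ ((n : ℝ) - β)) k, ← Real.rpow_mul hc.le,
    mul_mul_mul_comm, ← Real.rpow_add hR, ← Real.rpow_add hc, mul_assoc, ← Real.rpow_add hc]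
  congr 1
  · congr 1; push_cast; ring
  · congr 1; push_cast; ring

/-- The annuli decomposition sets. -/
def ann (n : ℕ) (R : ℝ) (k : ℕ) : Set (EuclideanSpace ℝ (Fin n)) :=
  ball 0 (R * (2:ℝ)⁻¹ ^ k) \ ball 0 (R * (2:ℝ)⁻¹ ^ (k + 1))

lemma ann_meas (n : ℕ) (R : ℝ) (k : ℕ) : MeasurableSet (ann n R k) :=
  measurableSet_ball.diff measurableSet_ball

lemma ann_disj (n : ℕ) (R : ℝ) (hR : 0 < R) : Pairwise (Function.onFun Disjoint (ann n R)) := by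
  have key : ∀ i j : ℕ, i < j → Disjoint (ann n R i) (ann n R j) := by
    intro i j hij
    rw [Set.disjoint_left]
    rintro z ⟨_, hz2⟩ ⟨hz3, _⟩
    apply hz2
    apply mem_of_mem_of_subset hz3 (ball_subset_ball ?_)
    have : ((2:ℝ)⁻¹) ^ j ≤ (2:ℝ)⁻¹ ^ (i + 1) :=
      pow_le_pow_of_le_one (by norm_num) (by norm_num) hij
    nlinarith
  intro i j hij
  rcases hij.lt_or_gt with h | h
  · exact key i j h
  · exact (key j i h).symm

lemma ann_subset (n : ℕ) {R : ℝ} (hR : 0 < R) :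
    ball (0 : EuclideanSpace ℝ (Fin n)) R \ {0} ⊆ ⋃ k, ann n R k := by
  rintro z ⟨hz, hz0⟩
  have hz0' : 0 < ‖z‖ := by
    rw [norm_pos_iff]
    simpa using hz0
  have hzR : ‖z‖ < R := by rwa [mem_ball_zero_iff] at hz
  have hex : ∃ k : ℕ, R * (2:ℝ)⁻¹ ^ (k + 1) ≤ ‖z‖ := by
    obtain ⟨k, hk⟩ := exists_pow_lt_of_lt_one (div_pos hz0' hR) (by norm_num : (2:ℝ)⁻¹ < 1)
    refine ⟨k, ?_⟩
    have h1 : R * (2:ℝ)⁻¹ ^ k < ‖z‖ := by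
      rw [mul_comm, ← lt_div_iff₀ hR]
      exact hk
    have h2 : (2:ℝ)⁻¹ ^ (k + 1) ≤ (2:ℝ)⁻¹ ^ k :=
      pow_le_pow_of_le_one (by norm_num) (by norm_num) (Nat.le_succ k)
    nlinarith
  classical
  set k₀ := Nat.find hex with hk₀
  refine mem_iUnion.mpr ⟨k₀, ?_, ?_⟩
  · rw [mem_ball_zero_iff]
    rcases Nat.eq_zero_or_pos k₀ with h0 | h0
    · rw [h0]; simpa using hzR
    · obtain ⟨m, hm⟩ := Nat.exists_eq_add_of_lt h0
      have hmin := Nat.find_min hex (show m < k₀ by omega)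
      rw [not_le] at hmin
      have : k₀ = m + 1 := by omega
      rw [this]
      exact hmin
  · rw [mem_ball_zero_iff, not_lt]
    exact Nat.find_spec hex

lemma lint_rpow_ball_lt_top (n : ℕ) (hn : 0 < n) {β : ℝ} (hβ0 : 0 ≤ β) (hβn : β < n)
    {R : ℝ} (hR : 0 < R) :
    ∫⁻ z in ball (0 : EuclideanSpace ℝ (Fin n)) R, ENNReal.ofReal (‖z‖ ^ (-β)) ∂volume < ⊤ := by
  have hNZ : NeZero n := ⟨hn.ne'⟩
  set c : ℝ := (2:ℝ)⁻¹ with hc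
  have hc0 : 0 < c := by norm_num
  have h0 : volume ({0} : Set (EuclideanSpace ℝ (Fin n))) = 0 := measure_singleton 0
  have hae : (ball (0 : EuclideanSpace ℝ (Fin n)) R \ {0} : Set _) =ᶠ[ae volume]
      (ball (0 : EuclideanSpace ℝ (Fin n)) R : Set _) :=
    diff_ae_eq_self.mpr (measure_mono_null inter_subset_right h0)
  rw [← setLIntegral_congr hae]
  calc ∫⁻ z in ball (0 : EuclideanSpace ℝ (Fin n)) R \ {0}, ENNReal.ofReal (‖z‖ ^ (-β)) ∂volume
      ≤ ∫⁻ z in ⋃ k, ann n R k, ENNReal.ofReal (‖z‖ ^ (-β)) ∂volume :=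
        lintegral_mono_set (ann_subset n hR)
    _ = ∑' k : ℕ, ∫⁻ z in ann n R k, ENNReal.ofReal (‖z‖ ^ (-β)) ∂volume :=
        lintegral_iUnion (ann_meas n R) (ann_disj n R hR) _
    _ ≤ ∑' k : ℕ, ENNReal.ofReal (R ^ ((n : ℝ) - β) * c ^ (-β) *
          (c ^ ((n : ℝ) - β)) ^ k) * volume (ball (0 : EuclideanSpace ℝ (Fin n)) 1) := by
        apply ENNReal.tsum_le_tsum
        intro k
        have hrad : (0:ℝ) < R * c ^ (k + 1) := by positivity
        calc ∫⁻ z in ann n R k, ENNReal.ofReal (‖z‖ ^ (-β)) ∂volume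
            ≤ ∫⁻ _ in ann n R k, ENNReal.ofReal ((R * c ^ (k + 1)) ^ (-β)) ∂volume := by
              apply setLIntegral_mono' (ann_meas n R k)
              intro z hz
              apply ENNReal.ofReal_le_ofReal
              apply rpow_neg_anti' hrad _ hβ0
              have := hz.2
              rw [mem_ball_zero_iff, not_lt] at this
              exact this
          _ = ENNReal.ofReal ((R * c ^ (k + 1)) ^ (-β)) * volume (ann n R k) :=
              setLIntegral_const _ _
          _ ≤ ENNReal.ofReal ((R * c ^ (k + 1)) ^ (-β)) *
                volume (ball (0 : EuclideanSpace ℝ (Fin n)) (R * c ^ k)) :=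
              mul_le_mul_right (measure_mono diff_subset) _
          _ = ENNReal.ofReal (R ^ ((n : ℝ) - β) * c ^ (-β) * (c ^ ((n : ℝ) - β)) ^ k) *
                volume (ball (0 : EuclideanSpace ℝ (Fin n)) 1) := by
              rw [Measure.addHaar_ball volume 0 (by positivity : (0:ℝ) ≤ R * c ^ k),
                finrank_euclideanSpace_fin, ← mul_assoc, ← ENNReal.ofReal_mul
                  (Real.rpow_nonneg hrad.le _), q_eq hR hc0]
    _ < ⊤ := by
        have hr1 : c ^ ((n : ℝ) - β) < 1 :=
          Real.rpow_lt_one hc0.le (by norm_num) (by linarith [hβn])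
        have hne : (1 : ℝ≥0∞) - ENNReal.ofReal (c ^ ((n : ℝ) - β)) ≠ 0 := by
          rw [← pos_iff_ne_zero, tsub_pos_iff_lt]
          exact (ENNReal.ofReal_lt_one).mpr hr1
        have hcalc : ∀ k : ℕ, ENNReal.ofReal (R ^ ((n : ℝ) - β) * c ^ (-β) *
            (c ^ ((n : ℝ) - β)) ^ k) * volume (ball (0 : EuclideanSpace ℝ (Fin n)) 1) =
            (ENNReal.ofReal (R ^ ((n : ℝ) - β) * c ^ (-β)) *
              volume (ball (0 : EuclideanSpace ℝ (Fin n)) 1)) *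
              (ENNReal.ofReal (c ^ ((n : ℝ) - β))) ^ k := by
          intro k
          rw [ENNReal.ofReal_mul (by positivity), ENNReal.ofReal_pow (by positivity)]
          ring
        simp_rw [hcalc]
        rw [ENNReal.tsum_mul_left, ENNReal.tsum_geometric]
        apply ENNReal.mul_lt_top
        · exact ENNReal.mul_lt_top ENNReal.ofReal_lt_top measure_ball_lt_top
        · exact ENNReal.inv_lt_top.mpr (pos_iff_ne_zero.mpr hne)
    
lemma lint_rpow_ball_eq_top (n : ℕ) (hn : 0 < n) :
    ∫⁻ z in ball (0 : EuclideanSpace ℝ (Fin n)) 1,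
      ENNReal.ofReal (‖z‖ ^ (-(n : ℝ))) ∂volume = ⊤ := by
  have hNZ : NeZero n := ⟨hn.ne'⟩
  have hc0 : (0:ℝ) < 2⁻¹ := by norm_num
  rw [eq_top_iff]
  calc (⊤ : ℝ≥0∞) = ∑' _ : ℕ, (ENNReal.ofReal (1 - (2:ℝ)⁻¹ ^ n) *
        volume (ball (0 : EuclideanSpace ℝ (Fin n)) 1)) := by
        rw [ENNReal.tsum_const_eq_top_of_ne_zero ?_]
        apply mul_ne_zero
        · rw [ne_eq, ENNReal.ofReal_eq_zero, not_le]
          have : (2:ℝ)⁻¹ ^ n < 1 := pow_lt_one₀ hc0.le (by norm_num) hn.ne'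
          linarith
        · exact (measure_ball_pos volume _ one_pos).ne'
    _ ≤ ∑' k : ℕ, ∫⁻ z in ann n 1 k, ENNReal.ofReal (‖z‖ ^ (-(n:ℝ))) ∂volume := by
        apply ENNReal.tsum_le_tsum
        intro k
        have hpk : (0:ℝ) < (2:ℝ)⁻¹ ^ k := by positivity
        have hpk1 : (0:ℝ) < (2:ℝ)⁻¹ ^ (k+1) := by positivity
        have hballs : volume (ball (0 : EuclideanSpace ℝ (Fin n)) (1 * (2:ℝ)⁻¹ ^ (k + 1))) ≠ ⊤ :=
          measure_ball_lt_top.ne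
        have hsub : ball (0 : EuclideanSpace ℝ (Fin n)) (1 * (2:ℝ)⁻¹ ^ (k+1)) ⊆
            ball (0 : EuclideanSpace ℝ (Fin n)) (1 * (2:ℝ)⁻¹ ^ k) := by
          apply ball_subset_ball
          have : (2:ℝ)⁻¹ ^ (k+1) ≤ (2:ℝ)⁻¹ ^ k :=
            pow_le_pow_of_le_one hc0.le (by norm_num) (Nat.le_succ k)
          linarith
        have hmeasann : volume (ann n 1 k) =
            ENNReal.ofReal ((1 * (2:ℝ)⁻¹ ^ k) ^ n - (1 * (2:ℝ)⁻¹ ^ (k+1)) ^ n) *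
              volume (ball (0 : EuclideanSpace ℝ (Fin n)) 1) := by
          rw [ann, measure_diff hsub measurableSet_ball.nullMeasurableSet hballs,
            Measure.addHaar_ball volume 0 (by positivity : (0:ℝ) ≤ 1 * (2:ℝ)⁻¹ ^ k),
            Measure.addHaar_ball volume 0 (by positivity : (0:ℝ) ≤ 1 * (2:ℝ)⁻¹ ^ (k+1)),
            finrank_euclideanSpace_fin, ENNReal.ofReal_sub _ (by positivity),
            ENNReal.sub_mul (fun _ _ => measure_ball_lt_top.ne)]
        have scalar : (1 * (2:ℝ)⁻¹ ^ k) ^ (-(n:ℝ)) *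
            ((1 * (2:ℝ)⁻¹ ^ k) ^ n - (1 * (2:ℝ)⁻¹ ^ (k+1)) ^ n) = 1 - (2:ℝ)⁻¹ ^ n := by
          simp only [one_mul]
          rw [Real.rpow_neg hpk.le, Real.rpow_natCast]
          have hne : ((2:ℝ)⁻¹ ^ k) ^ n ≠ 0 := by positivity
          field_simp
          ring
        calc ENNReal.ofReal (1 - (2:ℝ)⁻¹ ^ n) * volume (ball (0 : EuclideanSpace ℝ (Fin n)) 1)
            = ENNReal.ofReal ((1 * (2:ℝ)⁻¹ ^ k) ^ (-(n:ℝ))) * volume (ann n 1 k) := by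
              rw [hmeasann, ← mul_assoc, ← ENNReal.ofReal_mul (by positivity), scalar]
          _ ≤ ∫⁻ z in ann n 1 k, ENNReal.ofReal (‖z‖ ^ (-(n:ℝ))) ∂volume := by
              rw [← setLIntegral_const]
              apply setLIntegral_mono' (ann_meas n 1 k)
              intro z hz
              apply ENNReal.ofReal_le_ofReal
              have hz2 : 1 * (2:ℝ)⁻¹ ^ (k+1) ≤ ‖z‖ := by
                have := hz.2
                rwa [mem_ball_zero_iff, not_lt] at this
              have hz1 : ‖z‖ ≤ 1 * (2:ℝ)⁻¹ ^ k := by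
                have := hz.1
                rw [mem_ball_zero_iff] at this
                linarith
              exact rpow_neg_anti' (by linarith : (0:ℝ) < ‖z‖) hz1 (by positivity)
    _ ≤ ∫⁻ z in ball (0 : EuclideanSpace ℝ (Fin n)) 1,
          ENNReal.ofReal (‖z‖ ^ (-(n:ℝ))) ∂volume := by
        rw [← lintegral_iUnion (ann_meas n 1) (ann_disj n 1 one_pos)]
        apply lintegral_mono_set
        apply iUnion_subset
        intro k
        apply diff_subset.trans (ball_subset_ball ?_)
        have := pow_le_one₀ hc0.le (by norm_num : (2:ℝ)⁻¹ ≤ 1) (n := k)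
        linarith
lemma lintFin1 {e : ℝ} (he : -1 < e) :
    ∫⁻ t in Ioc (0:ℝ) 1, ENNReal.ofReal (t ^ e) ∂volume < ⊤ := by
  have h1 : IntegrableOn (fun t : ℝ => t ^ e) (Ioc (0:ℝ) 1) volume :=
    (intervalIntegrable_iff_integrableOn_Ioc_of_le zero_le_one).mp
      (intervalIntegral.intervalIntegrable_rpow' he)
  calc ∫⁻ t in Ioc (0:ℝ) 1, ENNReal.ofReal (t ^ e) ∂volume
      ≤ ∫⁻ t in Ioc (0:ℝ) 1, (‖t ^ e‖₊ : ℝ≥0∞) ∂volume :=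
        lintegral_ofReal_le_lintegral_enorm _
    _ < ⊤ := h1.2

lemma lintFin2 {e : ℝ} (he : e < -1) :
    ∫⁻ t in Ioi (1:ℝ), ENNReal.ofReal (t ^ e) ∂volume < ⊤ := by
  have h1 : IntegrableOn (fun t : ℝ => t ^ e) (Ioi (1:ℝ)) volume :=
    integrableOn_Ioi_rpow_of_lt he one_pos
  calc ∫⁻ t in Ioi (1:ℝ), ENNReal.ofReal (t ^ e) ∂volume
      ≤ ∫⁻ t in Ioi (1:ℝ), (‖t ^ e‖₊ : ℝ≥0∞) ∂volume :=
        lintegral_ofReal_le_lintegral_enorm _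
    _ < ⊤ := h1.2
  
lemma add_rpow_le' (a b : ℝ≥0∞) {p : ℝ} (hp : 0 ≤ p) :
    (a + b) ^ p ≤ 2 ^ p * (a ^ p + b ^ p) := by
  have h1 : a + b ≤ 2 * max a b := by
    rcases le_total a b with h | h
    · calc a + b ≤ b + b := by gcongr
        _ = 2 * b := (two_mul b).symm
        _ ≤ 2 * max a b := by gcongr; exact le_max_right _ _
    · calc a + b ≤ a + a := by gcongr
        _ = 2 * a := (two_mul a).symm
        _ ≤ 2 * max a b := by gcongr; exact le_max_left _ _
  calc (a + b) ^ p ≤ (2 * max a b) ^ p := ENNReal.rpow_le_rpow h1 hp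
    _ = 2 ^ p * (max a b) ^ p := ENNReal.mul_rpow_of_nonneg _ _ hp
    _ ≤ 2 ^ p * (a ^ p + b ^ p) := by
        gcongr
        rcases le_total a b with h | h
        · rw [max_eq_right h]; exact le_add_self
        · rw [max_eq_left h]; exact le_self_add

lemma ofReal_rpow_le_one_of_le_one {t e : ℝ} (ht : t ≤ 1) (he : 0 ≤ e) :
    ENNReal.ofReal t ^ e ≤ 1 := by
  calc ENNReal.ofReal t ^ e ≤ ENNReal.ofReal 1 ^ e :=
        ENNReal.rpow_le_rpow (ENNReal.ofReal_le_ofReal ht) he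
    _ = 1 := by rw [ENNReal.ofReal_one, ENNReal.one_rpow]

lemma ofReal_rpow_neg_le_one {t s : ℝ} (ht : 1 ≤ t) (hs : 0 ≤ s) :
    ENNReal.ofReal t ^ (-s) ≤ 1 := by
  rw [ENNReal.rpow_neg]
  rw [ENNReal.inv_le_one]
  calc (1:ℝ≥0∞) = 1 ^ s := (ENNReal.one_rpow s).symm
    _ ≤ ENNReal.ofReal t ^ s := by
        apply ENNReal.rpow_le_rpow _ hs
        rw [show (1:ℝ≥0∞) = ENNReal.ofReal 1 from ENNReal.ofReal_one.symm]
        exact ENNReal.ofReal_le_ofReal ht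

lemma timeNorm_fin {s s' : ℝ} (hs : 0 < s) (hss' : s < s') {q : ℝ≥0∞} (hq : 0 < q)
    {K : ℝ → ℝ≥0∞} {D : ℝ≥0∞} (hD : D ≠ ⊤)
    (h1 : ∀ t : ℝ, 0 < t → t ≤ 1 → K t ≤ D * ENNReal.ofReal t ^ s')
    (h2 : ∀ t : ℝ, 0 < t → K t ≤ D) :
    timeNorm q (fun t => ENNReal.ofReal t ^ (-s) * K t) < ⊤ := by
  have hs'0 : 0 < s' := hs.trans hss'
  rw [timeNorm]
  split_ifs with hqt
  · apply lt_of_le_of_lt (iSup₂_le ?_) (lt_top_iff_ne_top.mpr hD)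
    intro t ht
    rw [mem_Ioi] at ht
    have htne : ENNReal.ofReal t ≠ 0 := by
      rw [ne_eq, ENNReal.ofReal_eq_zero]; linarith
    rcases le_or_gt t 1 with hle | hlt
    · calc ENNReal.ofReal t ^ (-s) * K t
          ≤ ENNReal.ofReal t ^ (-s) * (D * ENNReal.ofReal t ^ s') :=
            mul_le_mul_right (h1 t ht hle) _
        _ = D * (ENNReal.ofReal t ^ (-s) * ENNReal.ofReal t ^ s') := by ring
        _ = D * ENNReal.ofReal t ^ (s' - s) := by
            rw [← ENNReal.rpow_add _ _ htne ENNReal.ofReal_ne_top]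
            ring_nf
        _ ≤ D * 1 := mul_le_mul_right (ofReal_rpow_le_one_of_le_one hle (by linarith)) _
        _ = D := mul_one D
    · calc ENNReal.ofReal t ^ (-s) * K t ≤ ENNReal.ofReal t ^ (-s) * D :=
            mul_le_mul_right (h2 t ht) _
        _ ≤ 1 * D := mul_le_mul_left (ofReal_rpow_neg_le_one hlt.le hs.le) _
        _ = D := one_mul D
  · set q' : ℝ := q.toReal with hq'def
    have hq' : 0 < q' := ENNReal.toReal_pos hq.ne' hqt
    have hDq : D ^ q' ≠ ⊤ := ENNReal.rpow_ne_top_of_nonneg hq'.le hD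
    apply ENNReal.rpow_lt_top_of_nonneg (by positivity)
    rw [← lt_top_iff_ne_top]
    rw [← Ioc_union_Ioi_eq_Ioi (zero_le_one (α := ℝ)),
      lintegral_union measurableSet_Ioi (Ioc_disjoint_Ioi le_rfl)]
    apply ENNReal.add_lt_top.mpr
    constructor
    · calc ∫⁻ t in Ioc (0:ℝ) 1,
            (ENNReal.ofReal t ^ (-s) * K t) ^ q' * ENNReal.ofReal (1 / t) ∂volume
          ≤ ∫⁻ t in Ioc (0:ℝ) 1, D ^ q' * ENNReal.ofReal (t ^ ((s' - s) * q' - 1)) ∂volume := by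
            apply setLIntegral_mono' measurableSet_Ioc
            intro t ht
            obtain ⟨ht0, ht1⟩ := ht
            have e0 : ENNReal.ofReal t ^ (-s) * K t ≤ D * ENNReal.ofReal t ^ (s' - s) := by
              calc ENNReal.ofReal t ^ (-s) * K t
                  ≤ ENNReal.ofReal t ^ (-s) * (D * ENNReal.ofReal t ^ s') :=
                    mul_le_mul_right (h1 t ht0 ht1) _
                _ = D * (ENNReal.ofReal t ^ (-s) * ENNReal.ofReal t ^ s') := by ring
                _ = D * ENNReal.ofReal t ^ (s' - s) := by
                    rw [← ENNReal.rpow_add _ _ (by rw [ne_eq, ENNReal.ofReal_eq_zero]; linarith)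
                      ENNReal.ofReal_ne_top]
                    ring_nf
            calc (ENNReal.ofReal t ^ (-s) * K t) ^ q' * ENNReal.ofReal (1 / t)
                ≤ (D * ENNReal.ofReal t ^ (s' - s)) ^ q' * ENNReal.ofReal (1 / t) :=
                  mul_le_mul_left (ENNReal.rpow_le_rpow e0 hq'.le) _
              _ = D ^ q' * ENNReal.ofReal (t ^ ((s' - s) * q' - 1)) := by
                  rw [ENNReal.mul_rpow_of_nonneg _ _ hq'.le,
                    ENNReal.ofReal_rpow_of_pos ht0,
                    ENNReal.ofReal_rpow_of_pos (Real.rpow_pos_of_pos ht0 _), mul_assoc]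
                  congr 1
                  rw [← Real.rpow_mul ht0.le, ← ENNReal.ofReal_mul (Real.rpow_nonneg ht0.le _),
                    one_div, ← Real.rpow_neg_one t, ← Real.rpow_add ht0]
                  norm_num [sub_eq_add_neg]
        _ = D ^ q' * ∫⁻ t in Ioc (0:ℝ) 1, ENNReal.ofReal (t ^ ((s' - s) * q' - 1)) ∂volume :=
            lintegral_const_mul' _ _ hDq
        _ < ⊤ := ENNReal.mul_lt_top hDq.lt_top (lintFin1 (by nlinarith))
    · calc ∫⁻ t in Ioi (1:ℝ),
            (ENNReal.ofReal t ^ (-s) * K t) ^ q' * ENNReal.ofReal (1 / t) ∂volume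
          ≤ ∫⁻ t in Ioi (1:ℝ), D ^ q' * ENNReal.ofReal (t ^ ((-s) * q' - 1)) ∂volume := by
            apply setLIntegral_mono' measurableSet_Ioi
            intro t ht
            rw [mem_Ioi] at ht
            have ht0 : (0:ℝ) < t := by linarith
            calc (ENNReal.ofReal t ^ (-s) * K t) ^ q' * ENNReal.ofReal (1 / t)
                ≤ (ENNReal.ofReal t ^ (-s) * D) ^ q' * ENNReal.ofReal (1 / t) :=
                  mul_le_mul_left (ENNReal.rpow_le_rpow
                    (mul_le_mul_right (h2 t ht0) _) hq'.le) _
              _ = D ^ q' * ENNReal.ofReal (t ^ ((-s) * q' - 1)) := by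
                  rw [mul_comm (ENNReal.ofReal t ^ (-s)) D,
                    ENNReal.mul_rpow_of_nonneg _ _ hq'.le,
                    ENNReal.ofReal_rpow_of_pos ht0,
                    ENNReal.ofReal_rpow_of_pos (Real.rpow_pos_of_pos ht0 _), mul_assoc]
                  congr 1
                  rw [← Real.rpow_mul ht0.le, ← ENNReal.ofReal_mul (Real.rpow_nonneg ht0.le _),
                    one_div, ← Real.rpow_neg_one t, ← Real.rpow_add ht0]
                  norm_num [sub_eq_add_neg]
        _ = D ^ q' * ∫⁻ t in Ioi (1:ℝ), ENNReal.ofReal (t ^ ((-s) * q' - 1)) ∂volume :=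
            lintegral_const_mul' _ _ hDq
        _ < ⊤ := ENNReal.mul_lt_top hDq.lt_top (lintFin2 (by nlinarith))

section
variable {n : ℕ}
local notation "E" => EuclideanSpace ℝ (Fin n)

lemma swap_full (g : E → ℝ≥0∞) (hg : Measurable g) (t : ℝ) :
    ∫⁻ x, ∫⁻ y in ball x t, g y ∂volume ∂volume
      = volume (ball (0 : E) t) * ∫⁻ y, g y ∂volume := by
  have hmeas : Measurable (Function.uncurry fun (x y : E) => (ball x t).indicator g y) := by
    have heq : (Function.uncurry fun (x y : E) => (ball x t).indicator g y) =
        fun q : E × E => if dist q.2 q.1 < t then g q.2 else 0 := by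
      funext q
      show (ball q.1 t).indicator g q.2 = _
      by_cases hq : dist q.2 q.1 < t
      · rw [if_pos hq]
        exact Set.indicator_of_mem (mem_ball.mpr hq) g
      · rw [if_neg hq]
        exact Set.indicator_of_notMem (fun hmem => hq (mem_ball.mp hmem)) g
    rw [heq]
    exact Measurable.ite
      (measurableSet_lt (measurable_snd.dist measurable_fst) measurable_const)
      (hg.comp measurable_snd) measurable_const
  calc ∫⁻ x, ∫⁻ y in ball x t, g y ∂volume ∂volume
      = ∫⁻ x, ∫⁻ y, (ball x t).indicator g y ∂volume ∂volume := by
        simp_rw [lintegral_indicator measurableSet_ball]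
    _ = ∫⁻ y, ∫⁻ x, (ball x t).indicator g y ∂volume ∂volume :=
        lintegral_lintegral_swap hmeas.aemeasurable
    _ = ∫⁻ y, g y * volume (ball (0 : E) t) ∂volume := by
        apply lintegral_congr
        intro y
        have hix : ∀ x : E, (ball x t).indicator g y = (ball y t).indicator (fun _ => g y) x := by
          intro x
          by_cases hx : x ∈ ball y t
          · rw [Set.indicator_of_mem hx]
            exact Set.indicator_of_mem (by rw [mem_ball] at hx ⊢; rwa [dist_comm]) g
          · rw [Set.indicator_of_notMem hx]
            apply (Set.indicator_of_notMem · g)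
            rw [mem_ball] at hx ⊢
            rwa [dist_comm]
        simp_rw [hix]
        rw [lintegral_indicator_const measurableSet_ball, Measure.addHaar_ball_center]
    _ = volume (ball (0 : E) t) * ∫⁻ y, g y ∂volume := by
        rw [lintegral_mul_const' _ _ measure_ball_lt_top.ne, mul_comm]

lemma kernel_bounds (hn : 0 < n) (α s' p : ℝ) (hα : 0 < α) (hp : 0 < p)
    (hs'0 : 0 < s') (hs'1 : s' ≤ 1) (hβn : (α + s') * p < n) :
    ∃ D : ℝ≥0∞, D ≠ ⊤ ∧ ∀ t : ℝ, 0 < t →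
      besovKernel (volume : Measure E) (ENNReal.ofReal p)
        (fun x : E => if ‖x‖ < 1 then ‖x‖ ^ (-α) else 1) t ≤ D ∧
      (t ≤ 1 → besovKernel (volume : Measure E) (ENNReal.ofReal p)
        (fun x : E => if ‖x‖ < 1 then ‖x‖ ^ (-α) else 1) t ≤ D * ENNReal.ofReal t ^ s') := by
  have hNZ : NeZero n := ⟨hn.ne'⟩
  have hn' : (0:ℝ) < n := by exact_mod_cast hn
  set u : E → ℝ := fun x => if ‖x‖ < 1 then ‖x‖ ^ (-α) else 1 with hu_def
  have hu_meas : Measurable u :=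
    Measurable.ite (measurableSet_lt measurable_norm measurable_const)
      (measurable_norm.pow_const _) measurable_const
  set CC : ℝ := (⌈α⌉₊ : ℝ) + 1 with hCC_def
  have hCC0 : 0 < CC := by positivity
  set γ : ℝ := α + s' with hγ_def
  have hγ0 : 0 < γ := by positivity
  set β : ℝ := γ * p with hβ_def
  have hβ0 : 0 < β := by positivity
  have hβ₂ : 0 < α * p := by positivity
  have hβ₂n : α * p < n := by nlinarith [mul_pos hs'0 hp]
  set gβ : E → ℝ≥0∞ := fun z => ENNReal.ofReal (‖z‖ ^ (-β)) with hgβ_def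
  have hgβ_meas : Measurable gβ := (measurable_norm.pow_const _).ennreal_ofReal
  set w : E → ℝ≥0∞ := fun z => ENNReal.ofReal |u z - 1| ^ p with hw_def
  have hw_meas : Measurable w := ((hu_meas.sub measurable_const).abs.ennreal_ofReal).pow_const _
  -- the function u is bounded appropriately
  have huv : ∀ z : E, w z ≤ (ball (0:E) 1).indicator
      (fun z' => 1 + ENNReal.ofReal (‖z'‖ ^ (-(α * p)))) z := by
    intro z
    by_cases hz1 : ‖z‖ < 1
    · rw [Set.indicator_of_mem (mem_ball_zero_iff.mpr hz1)]
      rcases eq_or_lt_of_le (norm_nonneg z) with hz0 | hz0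
      · have : u z = 0 := by
          rw [hu_def]
          simp only [if_pos hz1]
          rw [← hz0, Real.zero_rpow (by linarith : -α ≠ 0)]
        rw [hw_def]
        simp only [this]
        rw [zero_sub, abs_neg, abs_one, ENNReal.ofReal_one, ENNReal.one_rpow]
        exact le_add_of_nonneg_right zero_le
      · have h1le : 1 ≤ ‖z‖ ^ (-α) :=
          Real.one_le_rpow_of_pos_of_le_one_of_nonpos hz0 hz1.le (by linarith)
        have huz : u z = ‖z‖ ^ (-α) := by rw [hu_def]; simp only [if_pos hz1]
        calc w z = ENNReal.ofReal (‖z‖ ^ (-α) - 1) ^ p := by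
              rw [hw_def]
              simp only [huz]
              rw [abs_of_nonneg (by linarith)]
          _ ≤ ENNReal.ofReal (‖z‖ ^ (-α)) ^ p :=
              ENNReal.rpow_le_rpow (ENNReal.ofReal_le_ofReal (by linarith)) hp.le
          _ = ENNReal.ofReal (‖z‖ ^ (-(α * p))) := by
              rw [ENNReal.ofReal_rpow_of_nonneg (by positivity) hp.le]
              congr 1
              rw [← Real.rpow_mul (norm_nonneg z)]
              congr 1
              ring
          _ ≤ 1 + ENNReal.ofReal (‖z‖ ^ (-(α * p))) := le_add_self
    · have huz : u z = 1 := by rw [hu_def]; simp only [if_neg hz1]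
      have : w z = 0 := by
        rw [hw_def]
        simp only [huz]
        rw [sub_self, abs_zero, ENNReal.ofReal_zero, ENNReal.zero_rpow_of_pos hp]
      rw [this]
      exact zero_le
  set W : ℝ≥0∞ := ∫⁻ z, w z ∂volume with hW_def
  have hWfin : W < ⊤ := by
    calc W ≤ ∫⁻ z, (ball (0:E) 1).indicator
          (fun z' => 1 + ENNReal.ofReal (‖z'‖ ^ (-(α * p)))) z ∂volume := lintegral_mono huv
      _ = ∫⁻ z in ball (0:E) 1, (1 + ENNReal.ofReal (‖z‖ ^ (-(α * p)))) ∂volume :=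
          lintegral_indicator measurableSet_ball _
      _ = ∫⁻ _ in ball (0:E) 1, (1:ℝ≥0∞) ∂volume +
            ∫⁻ z in ball (0:E) 1, ENNReal.ofReal (‖z‖ ^ (-(α * p))) ∂volume :=
          lintegral_add_left measurable_const _
      _ < ⊤ := by
          apply ENNReal.add_lt_top.mpr
          constructor
          · rw [setLIntegral_const, one_mul]
            exact measure_ball_lt_top
          · exact lint_rpow_ball_lt_top n hn hβ₂.le hβ₂n one_pos
  -- pointwise Hölder-type bound
  have hclaimE : ∀ x y : E, dist x y ≤ 1 →
      |u x - u y| ≤ CC * dist x y ^ s' * (‖x‖ ^ (-γ) + ‖y‖ ^ (-γ)) := by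
    intro x y hd1
    rcases le_total ‖x‖ ‖y‖ with hxy | hxy
    · have hba : ‖y‖ ≤ ‖x‖ + dist x y := by
        have h1 : ‖y‖ - ‖x‖ ≤ dist x y := by
          rw [dist_comm, dist_eq_norm]
          exact norm_sub_norm_le y x
        linarith
      exact vclaim hα hs'0 hs'1 (norm_nonneg x) hxy hba hd1
    · have h1 : ‖x‖ - ‖y‖ ≤ dist y x := by
        rw [dist_comm, dist_eq_norm]
        exact norm_sub_norm_le x y
      have hthis := vclaim hα hs'0 hs'1 (norm_nonneg y) hxy
        (by linarith : ‖x‖ ≤ ‖y‖ + dist y x) (by rwa [dist_comm])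
      rw [abs_sub_comm] at hthis
      calc |u x - u y| ≤ CC * dist y x ^ s' * (‖y‖ ^ (-γ) + ‖x‖ ^ (-γ)) := hthis
        _ = CC * dist x y ^ s' * (‖x‖ ^ (-γ) + ‖y‖ ^ (-γ)) := by rw [dist_comm]; ring
  -- besovKernel rewriting
  have hKrw : ∀ t : ℝ, besovKernel (volume : Measure E) (ENNReal.ofReal p) u t =
      (∫⁻ x, (⨍⁻ y in ball x t, ENNReal.ofReal |u x - u y| ^ p ∂volume) ∂volume) ^ (1/p) := by
    intro t
    rw [besovKernel, if_neg ENNReal.ofReal_ne_top, ENNReal.toReal_ofReal hp.le]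
  have h2p : (2:ℝ≥0∞) ^ p ≠ ⊤ :=
    ENNReal.rpow_ne_top_of_nonneg hp.le (by simp : (2:ℝ≥0∞) ≠ ⊤)
  set I₂ : ℝ≥0∞ := ∫⁻ z in ball (0:E) 2, gβ z ∂volume with hI₂
  set I₃ : ℝ≥0∞ := ∫⁻ z in ball (0:E) 3, gβ z ∂volume with hI₃
  have hI₂fin : I₂ < ⊤ := lint_rpow_ball_lt_top n hn hβ0.le hβn two_pos
  have hI₃fin : I₃ < ⊤ := lint_rpow_ball_lt_top n hn hβ0.le hβn (by norm_num : (0:ℝ) < 3)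
  -- Step B: uniform bound
  have hB : ∀ t : ℝ, 0 < t →
      (∫⁻ x, (⨍⁻ y in ball x t, ENNReal.ofReal |u x - u y| ^ p ∂volume) ∂volume) ≤
        2 ^ p * (W + W) := by
    intro t ht
    set μB : ℝ≥0∞ := volume (ball (0:E) t) with hμB_def
    have hμB0 : μB ≠ 0 := (measure_ball_pos volume 0 ht).ne'
    have hμBtop : μB ≠ ⊤ := measure_ball_lt_top.ne
    have hpt : ∀ x : E, (⨍⁻ y in ball x t, ENNReal.ofReal |u x - u y| ^ p ∂volume) ≤
        2 ^ p * (w x + (∫⁻ y in ball x t, w y ∂volume) * μB⁻¹) := by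
      intro x
      rw [setLAverage_eq, Measure.addHaar_ball_center]
      have hnum : ∫⁻ y in ball x t, ENNReal.ofReal |u x - u y| ^ p ∂volume ≤
          2 ^ p * (w x * μB + ∫⁻ y in ball x t, w y ∂volume) := by
        calc ∫⁻ y in ball x t, ENNReal.ofReal |u x - u y| ^ p ∂volume
            ≤ ∫⁻ y in ball x t, 2 ^ p * (w x + w y) ∂volume := by
              apply setLIntegral_mono' measurableSet_ball
              intro y _
              have habs : |u x - u y| ≤ |u x - 1| + |u y - 1| := by
                have h1 := abs_sub_le (u x) 1 (u y)
                have h2 : |1 - u y| = |u y - 1| := abs_sub_comm _ _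
                linarith
              calc ENNReal.ofReal |u x - u y| ^ p
                  ≤ (ENNReal.ofReal |u x - 1| + ENNReal.ofReal |u y - 1|) ^ p := by
                    apply ENNReal.rpow_le_rpow _ hp.le
                    exact le_trans (ENNReal.ofReal_le_ofReal habs) ENNReal.ofReal_add_le
                _ ≤ 2 ^ p * (ENNReal.ofReal |u x - 1| ^ p + ENNReal.ofReal |u y - 1| ^ p) :=
                    add_rpow_le' _ _ hp.le
          _ = 2 ^ p * (w x * μB + ∫⁻ y in ball x t, w y ∂volume) := by
              rw [lintegral_const_mul' _ _ h2p, lintegral_add_left measurable_const,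
                setLIntegral_const, Measure.addHaar_ball_center]
      apply le_trans (ENNReal.div_le_div_right hnum _)
      rw [div_eq_mul_inv, mul_assoc]
      apply le_of_eq
      congr 1
      rw [add_mul, mul_assoc, ENNReal.mul_inv_cancel hμB0 hμBtop, mul_one]
    calc (∫⁻ x, (⨍⁻ y in ball x t, ENNReal.ofReal |u x - u y| ^ p ∂volume) ∂volume)
        ≤ ∫⁻ x, 2 ^ p * (w x + (∫⁻ y in ball x t, w y ∂volume) * μB⁻¹) ∂volume :=
          lintegral_mono hpt
      _ = 2 ^ p * (W + (∫⁻ x, ∫⁻ y in ball x t, w y ∂volume ∂volume) * μB⁻¹) := by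
          rw [lintegral_const_mul' _ _ h2p, lintegral_add_left hw_meas,
            lintegral_mul_const' _ _ (ENNReal.inv_ne_top.mpr hμB0)]
      _ = 2 ^ p * (W + (μB * W) * μB⁻¹) := by rw [swap_full w hw_meas t]
      _ = 2 ^ p * (W + W) := by
          rw [mul_comm μB W, mul_assoc, ENNReal.mul_inv_cancel hμB0 hμBtop, mul_one]
  -- Step A: small-t bound
  have hA : ∀ t : ℝ, 0 < t → t ≤ 1 →
      (∫⁻ x, (⨍⁻ y in ball x t, ENNReal.ofReal |u x - u y| ^ p ∂volume) ∂volume) ≤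
        (2 ^ p * ENNReal.ofReal (CC ^ p) * (I₂ + I₃)) * ENNReal.ofReal t ^ (s' * p) := by
    intro t ht ht1
    set μB : ℝ≥0∞ := volume (ball (0:E) t) with hμB_def
    have hμB0 : μB ≠ 0 := (measure_ball_pos volume 0 ht).ne'
    have hμBtop : μB ≠ ⊤ := measure_ball_lt_top.ne
    set c₁ : ℝ≥0∞ := 2 ^ p * ENNReal.ofReal (CC ^ p) * ENNReal.ofReal (t ^ (s' * p)) with hc₁
    have hc₁top : c₁ ≠ ⊤ :=
      ENNReal.mul_ne_top (ENNReal.mul_ne_top h2p ENNReal.ofReal_ne_top) ENNReal.ofReal_ne_top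
    set g3 : E → ℝ≥0∞ := (ball (0:E) 3).indicator gβ with hg3_def
    have hg3_meas : Measurable g3 := hgβ_meas.indicator measurableSet_ball
    have hg3int : ∫⁻ y, g3 y ∂volume = I₃ := lintegral_indicator measurableSet_ball _
    set f : E → ℝ≥0∞ :=
      fun x => ⨍⁻ y in ball x t, ENNReal.ofReal |u x - u y| ^ p ∂volume with hf_def
    have hvan : ∀ x : E, x ∉ ball (0:E) 2 → f x = 0 := by
      intro x hx
      rw [mem_ball_zero_iff, not_lt] at hx
      have hux : u x = 1 := if_neg (by push_neg; linarith)
      rw [hf_def]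
      simp only []
      rw [setLAverage_eq]
      have hz : ∫⁻ y in ball x t, ENNReal.ofReal |u x - u y| ^ p ∂volume =
          ∫⁻ _ in ball x t, (0:ℝ≥0∞) ∂volume := by
        apply setLIntegral_congr_fun measurableSet_ball
        intro y hy
        rw [mem_ball] at hy
        have hy1 : ¬ ‖y‖ < 1 := by
          have h1 : ‖x‖ - ‖y‖ ≤ dist y x := by
            rw [dist_eq_norm'] 
            exact norm_sub_norm_le x y
          push_neg
          linarith
        have huy : u y = 1 := if_neg hy1
        beta_reduce
        rw [hux, huy, sub_self, abs_zero, ENNReal.ofReal_zero, ENNReal.zero_rpow_of_pos hp]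
      rw [hz, lintegral_zero, ENNReal.zero_div]
    have hfind : (fun x : E => f x) = (ball (0:E) 2).indicator f := by
      funext x
      by_cases hx : x ∈ ball (0:E) 2
      · rw [Set.indicator_of_mem hx]
      · rw [Set.indicator_of_notMem hx, hvan x hx]
    have hptA : ∀ x : E, x ∈ ball (0:E) 2 →
        f x ≤ c₁ * (gβ x + (∫⁻ y in ball x t, g3 y ∂volume) * μB⁻¹) := by
      intro x hx
      rw [mem_ball_zero_iff] at hx
      rw [hf_def]
      simp only []
      rw [setLAverage_eq, Measure.addHaar_ball_center]
      have hnum : ∫⁻ y in ball x t, ENNReal.ofReal |u x - u y| ^ p ∂volume ≤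
          c₁ * (gβ x * μB + ∫⁻ y in ball x t, g3 y ∂volume) := by
        calc ∫⁻ y in ball x t, ENNReal.ofReal |u x - u y| ^ p ∂volume
            ≤ ∫⁻ y in ball x t, c₁ * (gβ x + g3 y) ∂volume := by
              apply setLIntegral_mono' measurableSet_ball
              intro y hy
              rw [mem_ball] at hy
              have hyx : dist x y < t := by rw [dist_comm]; exact hy
              have hreal : |u x - u y| ≤ (CC * t ^ s') * (‖x‖ ^ (-γ) + ‖y‖ ^ (-γ)) := by
                have h1 := hclaimE x y (by linarith)
                have h2 : dist x y ^ s' ≤ t ^ s' := Real.rpow_le_rpow dist_nonneg hyx.le hs'0.le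
                have h3 : (0:ℝ) ≤ ‖x‖ ^ (-γ) + ‖y‖ ^ (-γ) := by positivity
                have h4 := mul_le_mul_of_nonneg_right
                  (mul_le_mul_of_nonneg_left h2 hCC0.le) h3
                linarith
              have hy3 : g3 y = gβ y := by
                apply Set.indicator_of_mem
                rw [mem_ball_zero_iff]
                have h1 : ‖y‖ - ‖x‖ ≤ dist x y := by
                  rw [dist_comm, dist_eq_norm]
                  exact norm_sub_norm_le y x
                linarith
              rw [hy3]
              calc ENNReal.ofReal |u x - u y| ^ p
                  ≤ (ENNReal.ofReal (CC * t ^ s') *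
                      (ENNReal.ofReal (‖x‖ ^ (-γ)) + ENNReal.ofReal (‖y‖ ^ (-γ)))) ^ p := by
                    apply ENNReal.rpow_le_rpow _ hp.le
                    rw [← ENNReal.ofReal_add (by positivity) (by positivity),
                      ← ENNReal.ofReal_mul (by positivity)]
                    exact ENNReal.ofReal_le_ofReal hreal
                _ = ENNReal.ofReal (CC * t ^ s') ^ p *
                      (ENNReal.ofReal (‖x‖ ^ (-γ)) + ENNReal.ofReal (‖y‖ ^ (-γ))) ^ p :=
                    ENNReal.mul_rpow_of_nonneg _ _ hp.le
                _ ≤ ENNReal.ofReal (CC * t ^ s') ^ p *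
                      (2 ^ p * (ENNReal.ofReal (‖x‖ ^ (-γ)) ^ p +
                        ENNReal.ofReal (‖y‖ ^ (-γ)) ^ p)) :=
                    mul_le_mul_right (add_rpow_le' _ _ hp.le) _
                _ = c₁ * (gβ x + gβ y) := by
                    have e1 : ∀ z : E, ENNReal.ofReal (‖z‖ ^ (-γ)) ^ p = gβ z := by
                      intro z
                      rw [hgβ_def]
                      simp only []
                      rw [ENNReal.ofReal_rpow_of_nonneg (by positivity) hp.le]
                      congr 1
                      rw [← Real.rpow_mul (norm_nonneg z)]
                      congr 1
                      rw [hβ_def]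
                      ring
                    have e2 : ENNReal.ofReal (CC * t ^ s') ^ p =
                        ENNReal.ofReal (CC ^ p) * ENNReal.ofReal (t ^ (s' * p)) := by
                      rw [ENNReal.ofReal_rpow_of_nonneg (by positivity) hp.le,
                        Real.mul_rpow hCC0.le (by positivity), ← Real.rpow_mul ht.le,
                        ENNReal.ofReal_mul (by positivity)]
                    rw [e1 x, e1 y, e2, hc₁]
                    ring
          _ = c₁ * (gβ x * μB + ∫⁻ y in ball x t, g3 y ∂volume) := by
              rw [lintegral_const_mul' _ _ hc₁top, lintegral_add_left measurable_const,
                setLIntegral_const, Measure.addHaar_ball_center]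
      apply le_trans (ENNReal.div_le_div_right hnum _)
      rw [div_eq_mul_inv, mul_assoc]
      apply le_of_eq
      congr 1
      rw [add_mul, mul_assoc, ENNReal.mul_inv_cancel hμB0 hμBtop, mul_one]
    calc (∫⁻ x, f x ∂volume)
        = ∫⁻ x in ball (0:E) 2, f x ∂volume := by
          conv_lhs => rw [hfind]
          rw [lintegral_indicator measurableSet_ball]
      _ ≤ ∫⁻ x in ball (0:E) 2,
            c₁ * (gβ x + (∫⁻ y in ball x t, g3 y ∂volume) * μB⁻¹) ∂volume :=
          setLIntegral_mono' measurableSet_ball hptA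
      _ = c₁ * (I₂ + (∫⁻ x in ball (0:E) 2, ∫⁻ y in ball x t, g3 y ∂volume ∂volume) * μB⁻¹) := by
          rw [lintegral_const_mul' _ _ hc₁top, lintegral_add_left hgβ_meas,
            lintegral_mul_const' _ _ (ENNReal.inv_ne_top.mpr hμB0)]
      _ ≤ c₁ * (I₂ + (μB * I₃) * μB⁻¹) := by
          apply mul_le_mul_right
          apply add_le_add_right
          apply mul_le_mul_left
          calc ∫⁻ x in ball (0:E) 2, ∫⁻ y in ball x t, g3 y ∂volume ∂volume
              ≤ ∫⁻ x, ∫⁻ y in ball x t, g3 y ∂volume ∂volume := setLIntegral_le_lintegral _ _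
            _ = μB * ∫⁻ y, g3 y ∂volume := swap_full g3 hg3_meas t
            _ = μB * I₃ := by rw [hg3int]
      _ = c₁ * (I₂ + I₃) := by
          have hcan : μB * I₃ * μB⁻¹ = I₃ := by
            rw [mul_comm μB I₃, mul_assoc, ENNReal.mul_inv_cancel hμB0 hμBtop, mul_one]
          rw [hcan]
      _ = (2 ^ p * ENNReal.ofReal (CC ^ p) * (I₂ + I₃)) * ENNReal.ofReal t ^ (s' * p) := by
          rw [hc₁, ENNReal.ofReal_rpow_of_pos ht]
          ring
  -- assemble
  set DB : ℝ≥0∞ := 2 ^ p * (W + W) with hDB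
  set DA : ℝ≥0∞ := 2 ^ p * ENNReal.ofReal (CC ^ p) * (I₂ + I₃) with hDA
  have hDBfin : DB ≠ ⊤ := ENNReal.mul_ne_top h2p
    (by rw [← lt_top_iff_ne_top]; exact ENNReal.add_lt_top.mpr ⟨hWfin, hWfin⟩)
  have hDAfin : DA ≠ ⊤ := ENNReal.mul_ne_top (ENNReal.mul_ne_top h2p ENNReal.ofReal_ne_top)
    (by rw [← lt_top_iff_ne_top]; exact ENNReal.add_lt_top.mpr ⟨hI₂fin, hI₃fin⟩)
  refine ⟨DB ^ (1/p) + DA ^ (1/p), ?_, ?_⟩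
  · rw [← lt_top_iff_ne_top]
    apply ENNReal.add_lt_top.mpr
    exact ⟨ENNReal.rpow_lt_top_of_nonneg (by positivity) hDBfin,
      ENNReal.rpow_lt_top_of_nonneg (by positivity) hDAfin⟩
  · intro t ht
    constructor
    · rw [hKrw t]
      calc (∫⁻ x, (⨍⁻ y in ball x t, ENNReal.ofReal |u x - u y| ^ p ∂volume) ∂volume) ^ (1/p)
          ≤ DB ^ (1/p) := ENNReal.rpow_le_rpow (hB t ht) (by positivity)
        _ ≤ DB ^ (1/p) + DA ^ (1/p) := le_self_add
    · intro ht1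
      rw [hKrw t]
      calc (∫⁻ x, (⨍⁻ y in ball x t, ENNReal.ofReal |u x - u y| ^ p ∂volume) ∂volume) ^ (1/p)
          ≤ (DA * ENNReal.ofReal t ^ (s' * p)) ^ (1/p) :=
            ENNReal.rpow_le_rpow (hA t ht ht1) (by positivity)
        _ = DA ^ (1/p) * (ENNReal.ofReal t ^ (s' * p)) ^ (1/p) :=
            ENNReal.mul_rpow_of_nonneg _ _ (by positivity)
        _ = DA ^ (1/p) * ENNReal.ofReal t ^ s' := by
            rw [← ENNReal.rpow_mul]
            congr 1
            field_simp
        _ ≤ (DB ^ (1/p) + DA ^ (1/p)) * ENNReal.ofReal t ^ s' :=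
            mul_le_mul_left le_add_self _

lemma memloc (hn : 0 < n) (α p : ℝ) (hα : 0 < α) (hp : 0 < p) (hβ₂n : α * p < n) :
    MemLocLp (volume : Measure E) (fun x : E => if ‖x‖ < 1 then ‖x‖ ^ (-α) else 1)
      (ENNReal.ofReal p) := by
  have hNZ : NeZero n := ⟨hn.ne'⟩
  intro x r hr
  set u : E → ℝ := fun x : E => if ‖x‖ < 1 then ‖x‖ ^ (-α) else 1 with hu_def
  have hu_meas : Measurable u :=
    Measurable.ite (measurableSet_lt measurable_norm measurable_const)
      (measurable_norm.pow_const _) measurable_const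
  constructor
  · exact hu_meas.aestronglyMeasurable
  · rw [eLpNorm_eq_lintegral_rpow_enorm_toReal
      (by rw [ne_eq, ENNReal.ofReal_eq_zero]; linarith) ENNReal.ofReal_ne_top,
      ENNReal.toReal_ofReal hp.le]
    apply ENNReal.rpow_lt_top_of_nonneg (by positivity)
    rw [← lt_top_iff_ne_top]
    have hpt : ∀ z : E, (‖u z‖₊ : ℝ≥0∞) ^ p ≤ 1 + ENNReal.ofReal (‖z‖ ^ (-(α * p))) := by
      intro z
      rw [show ((‖u z‖₊ : ℝ≥0∞)) = ENNReal.ofReal |u z| from Real.enorm_eq_ofReal_abs _]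
      by_cases hz1 : ‖z‖ < 1
      · rcases eq_or_lt_of_le (norm_nonneg z) with hz0 | hz0
        · have huz : u z = 0 := by
            rw [hu_def]
            simp only [if_pos hz1]
            rw [← hz0, Real.zero_rpow (by linarith : -α ≠ 0)]
          rw [huz, abs_zero, ENNReal.ofReal_zero, ENNReal.zero_rpow_of_pos hp]
          exact zero_le
        · have huz : u z = ‖z‖ ^ (-α) := if_pos hz1
          rw [huz, abs_of_nonneg (Real.rpow_nonneg (norm_nonneg z) _),
            ENNReal.ofReal_rpow_of_nonneg (by positivity) hp.le]
          have he : (‖z‖ ^ (-α)) ^ p = ‖z‖ ^ (-(α * p)) := by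
            rw [← Real.rpow_mul (norm_nonneg z)]
            congr 1
            ring
          rw [he]
          exact le_add_self
      · have huz : u z = 1 := if_neg hz1
        rw [huz, abs_one, ENNReal.ofReal_one, ENNReal.one_rpow]
        exact le_self_add
    calc ∫⁻ z in ball x r, ((‖u z‖₊ : ℝ≥0∞)) ^ p ∂volume
        ≤ ∫⁻ z in ball x r, (1 + ENNReal.ofReal (‖z‖ ^ (-(α * p)))) ∂volume :=
          setLIntegral_mono' measurableSet_ball (fun z _ => hpt z)
      _ = volume (ball x r) + ∫⁻ z in ball x r, ENNReal.ofReal (‖z‖ ^ (-(α * p))) ∂volume := by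
          rw [lintegral_add_left measurable_const, setLIntegral_const, one_mul]
      _ ≤ volume (ball x r) +
            ∫⁻ z in ball (0:E) (‖x‖ + r), ENNReal.ofReal (‖z‖ ^ (-(α * p))) ∂volume := by
          apply add_le_add_right
          apply lintegral_mono_set
          intro z hz
          rw [mem_ball] at hz
          rw [mem_ball_zero_iff]
          have h1 : ‖z‖ - ‖x‖ ≤ dist z x := by
            rw [dist_eq_norm]
            exact norm_sub_norm_le z x
          linarith
      _ < ⊤ := ENNReal.add_lt_top.mpr ⟨measure_ball_lt_top,
          lint_rpow_ball_lt_top n hn (by positivity) hβ₂n (by linarith [norm_nonneg x])⟩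

end


theorem statement4 (n : ℕ) (s p σ : ℝ) (hs0 : 0 < s) (hs1 : s < 1)
    (hp : 0 < p) (hpn : p < (n : ℝ) / s)
    (hσ : (n : ℝ) * p / ((n : ℝ) - p * s) < σ) :
    ∀ q : ℝ≥0∞, 0 < q →
      MemBesov (volume : Measure (EuclideanSpace ℝ (Fin n))) s (ENNReal.ofReal p) q
        (fun x : EuclideanSpace ℝ (Fin n) => if ‖x‖ < 1 then ‖x‖ ^ (-((n : ℝ) / σ)) else 1) ∧
      ∫⁻ x in ball (0 : EuclideanSpace ℝ (Fin n)) 1,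
          ENNReal.ofReal |(fun x : EuclideanSpace ℝ (Fin n) => if ‖x‖ < 1 then ‖x‖ ^ (-((n : ℝ) / σ)) else 1) x| ^ σ ∂volume = ∞ := by
  intro q hq
  have h1 : (0:ℝ) < (n:ℝ)/s := hp.trans hpn
  have hn' : (0:ℝ) < n := by
    rcases div_pos_iff.mp h1 with ⟨h2, _⟩ | ⟨_, h3⟩
    · exact h2
    · linarith
  have hn : 0 < n := by exact_mod_cast hn'
  have hps : p * s < n := by
    have h2 := (lt_div_iff₀ hs0).mp hpn
    linarith
  have hden : (0:ℝ) < (n:ℝ) - p * s := by linarith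
  have hσ0 : 0 < σ := lt_trans (by positivity) hσ
  set α : ℝ := (n:ℝ)/σ with hα_def
  have hα0 : 0 < α := by positivity
  have hαs : α < (n:ℝ)/p - s := by
    have h2 : (n:ℝ) * p < σ * ((n:ℝ) - p * s) := by
      have h3 := (div_lt_iff₀ hden).mp hσ
      linarith
    have h3 : (n:ℝ)/σ < ((n:ℝ) - p*s)/p := by
      rw [div_lt_div_iff₀ hσ0 hp]
      nlinarith
    have h4 : ((n:ℝ) - p*s)/p = (n:ℝ)/p - s := by field_simp
    rw [hα_def]
    linarith
  set m : ℝ := min 1 ((n:ℝ)/p - α) with hm_def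
  have hsm : s < m := lt_min hs1 (by linarith)
  set s' : ℝ := (s + m)/2 with hs'_def
  have hss' : s < s' := by rw [hs'_def]; linarith
  have hs'm : s' < m := by rw [hs'_def]; linarith
  have hs'0 : 0 < s' := hs0.trans hss'
  have hs'1 : s' ≤ 1 := le_of_lt (lt_of_lt_of_le hs'm (min_le_left _ _))
  have hs'np : s' < (n:ℝ)/p - α := lt_of_lt_of_le hs'm (min_le_right _ _)
  have hβn : (α + s') * p < n := by
    have h2 : α + s' < (n:ℝ)/p := by linarith
    calc (α + s') * p < ((n:ℝ)/p) * p := by nlinarith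
      _ = n := by field_simp
  refine ⟨⟨?_, ?_⟩, ?_⟩
  · exact memloc hn α p hα0 hp (by nlinarith [mul_pos hs'0 hp])
  · obtain ⟨D, hD, hprop⟩ := kernel_bounds hn α s' p hα0 hp hs'0 hs'1 hβn
    rw [besovNorm]
    exact timeNorm_fin hs0 hss' hq hD (fun t ht ht1 => (hprop t ht).2 ht1)
      (fun t ht => (hprop t ht).1)
  · have hcong : ∫⁻ x in ball (0 : EuclideanSpace ℝ (Fin n)) 1,
        ENNReal.ofReal |(fun x : EuclideanSpace ℝ (Fin n) =>
          if ‖x‖ < 1 then ‖x‖ ^ (-α) else 1) x| ^ σ ∂volume =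
        ∫⁻ x in ball (0 : EuclideanSpace ℝ (Fin n)) 1,
          ENNReal.ofReal (‖x‖ ^ (-(n:ℝ))) ∂volume := by
      apply setLIntegral_congr_fun measurableSet_ball
      intro z hz
      rw [mem_ball_zero_iff] at hz
      simp only [if_pos hz]
      rw [abs_of_nonneg (Real.rpow_nonneg (norm_nonneg z) _),
        ENNReal.ofReal_rpow_of_nonneg (Real.rpow_nonneg (norm_nonneg z) _) hσ0.le,
        ← Real.rpow_mul (norm_nonneg z)]
      congr 2
      rw [hα_def]
      field_simp
    rw [hcong]
    exact lint_rpow_ball_eq_top n hn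

end
end

section
/- Let (X,d,μ) be a doubling metric measure space. For every real-valued measurable function u on X there exists a measurable set E⊂X with μ(E)=0 such that for all z∈X∖E, the median values of u converge to u(z): for every ε>0 there exists δ>0 such that |m_u(B) − u(z)| < ε for every ball B containing z with μ(B) < δ. -/
open MeasureTheory Metric Set ENNReal NNReal

noncomputable section

variable {X : Type*} [MetricSpace X] [MeasurableSpace X] [BorelSpace X]

/-! ### Auxiliary material for the proof -/

open Topology Filter TopologicalSpace

set_option linter.unusedSectionVars false
set_option linter.unusedVariables false

lemma aux_doubling_le {μ : Measure X} {C₁ n : ℝ} (hC₁ : 1 < C₁) (hn : 0 < n)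
    (hdoub : IsDoubling μ C₁ n) (x : X) {r R : ℝ} (hr : 0 < r) (hR : r < R) :
    μ (ball x R) ≤ ENNReal.ofReal (C₁ * (R / r) ^ n) * μ (ball x r) := by
  have h1 : 1 < R / r := (one_lt_div hr).2 hR
  have h := hdoub x r (R / r) hr h1
  rwa [div_mul_cancel₀ _ hr.ne'] at h

lemma aux_separable (μ : Measure X) (C₁ n : ℝ) (hC₁ : 1 < C₁) (hn : 0 < n)
    (hdoub : IsDoubling μ C₁ n) (hballs : BallsPosFinite μ) :
    TopologicalSpace.SeparableSpace X := by
  rcases isEmpty_or_nonempty X with h | h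
  · exact ⟨⟨∅, countable_empty, fun x => (h.false x).elim⟩⟩
  obtain ⟨x₀⟩ := h
  rw [← TopologicalSpace.isSeparable_univ_iff]
  have hcov : (Set.univ : Set X) = ⋃ k : ℕ, ball x₀ ((k : ℝ) + 1) := by
    ext y
    simp only [mem_univ, true_iff, mem_iUnion, mem_ball]
    obtain ⟨k, hk⟩ := exists_nat_gt (dist y x₀)
    exact ⟨k, by linarith⟩
  rw [hcov]
  refine TopologicalSpace.IsSeparable.iUnion fun k => ?_
  set R : ℝ := (k : ℝ) + 1 with hRdef
  have hR : 0 < R := by positivity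
  refine TotallyBounded.isSeparable ?_
  by_contra hTB
  rw [Metric.totallyBounded_iff] at hTB
  push_neg at hTB
  obtain ⟨ε₀, hε₀, hnet⟩ := hTB
  set ε : ℝ := min ε₀ R with hεdef
  have hε : 0 < ε := lt_min hε₀ hR
  have hεR : ε ≤ R := min_le_right _ _
  have hnet' : ∀ F : Finset X, ∃ y ∈ ball x₀ R, ∀ f ∈ F, ε ≤ dist y f := by
    intro F
    by_contra hcon
    push_neg at hcon
    refine hnet (↑F) F.finite_toSet fun y hy => ?_
    obtain ⟨f, hf, hd⟩ := hcon y hy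
    exact mem_biUnion hf (lt_of_lt_of_le hd (min_le_left _ _))
  choose! g hg1 hg2 using hnet'
  classical
  let F : ℕ → Finset X := fun m => Nat.rec ∅ (fun _ Fm => insert (g Fm) Fm) m
  have hFmono : ∀ m, F m ⊆ F (m + 1) := fun m => Finset.subset_insert _ _
  have hFle : ∀ {m m' : ℕ}, m ≤ m' → F m ⊆ F m' := by
    intro m m' h
    induction h with
    | refl => exact Finset.Subset.refl _
    | step _ ih => exact ih.trans (hFmono _)
  set u : ℕ → X := fun m => g (F m) with hu
  have humem : ∀ m, u m ∈ ball x₀ R := fun m => hg1 (F m)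
  have huF : ∀ m, u m ∈ F (m + 1) := fun m => Finset.mem_insert_self _ _
  have hsep0 : ∀ {i j : ℕ}, i < j → ε ≤ dist (u j) (u i) := by
    intro i j hij
    exact hg2 (F j) (u i) (hFle hij (huF i))
  have hsep : ∀ i j : ℕ, i ≠ j → ε ≤ dist (u i) (u j) := by
    intro i j hij
    rcases hij.lt_or_gt with h | h
    · rw [dist_comm]; exact hsep0 h
    · exact hsep0 h
  have hdisj : Pairwise (Function.onFun Disjoint fun i : ℕ => ball (u i) (ε / 2)) := by
    intro i j hij
    refine Set.disjoint_left.2 fun w hwi hwj => ?_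
    rw [mem_ball] at hwi hwj
    have h1 := hsep i j hij
    have h2 := dist_triangle_left (u i) (u j) w
    linarith
  set D : ℝ≥0∞ := ENNReal.ofReal (C₁ * (2 * R / (ε / 2)) ^ n) with hD
  have hDpos : 0 < C₁ * (2 * R / (ε / 2)) ^ n := by
    have : (0:ℝ) < 2 * R / (ε / 2) := by positivity
    have := Real.rpow_pos_of_pos this n
    nlinarith
  have hD0 : D ≠ 0 := (ENNReal.ofReal_pos.2 hDpos).ne'
  have hDtop : D ≠ ∞ := ENNReal.ofReal_ne_top
  set c : ℝ≥0∞ := μ (ball x₀ R) / D with hc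
  have hc0 : c ≠ 0 := (ENNReal.div_pos (hballs x₀ R hR).1.ne' hDtop).ne'
  have hlow : ∀ i : ℕ, c ≤ μ (ball (u i) (ε / 2)) := by
    intro i
    have hsub : ball x₀ R ⊆ ball (u i) (2 * R) := by
      intro y hy
      rw [mem_ball] at hy ⊢
      have h1 := humem i
      rw [mem_ball] at h1
      have h2 := dist_triangle y x₀ (u i)
      have h3 : dist x₀ (u i) = dist (u i) x₀ := dist_comm _ _
      linarith
    have hhalf : 0 < ε / 2 := by linarith
    have hlt : ε / 2 < 2 * R := by linarith
    have hle := aux_doubling_le hC₁ hn hdoub (u i) hhalf hlt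
    rw [hc, ENNReal.div_le_iff hD0 hDtop]
    calc μ (ball x₀ R) ≤ μ (ball (u i) (2 * R)) := measure_mono hsub
      _ ≤ D * μ (ball (u i) (ε / 2)) := hle
      _ = μ (ball (u i) (ε / 2)) * D := mul_comm _ _
  have hun : (⋃ i : ℕ, ball (u i) (ε / 2)) ⊆ ball x₀ (2 * R) := by
    refine iUnion_subset fun i y hy => ?_
    rw [mem_ball] at hy ⊢
    have h1 := humem i
    rw [mem_ball] at h1
    have h2 := dist_triangle y (u i) x₀
    linarith
  have htop : (∞ : ℝ≥0∞) ≤ μ (ball x₀ (2 * R)) := by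
    calc (∞ : ℝ≥0∞) = ∑' _ : ℕ, c := (ENNReal.tsum_const_eq_top_of_ne_zero hc0).symm
      _ ≤ ∑' i : ℕ, μ (ball (u i) (ε / 2)) := ENNReal.tsum_le_tsum hlow
      _ = μ (⋃ i : ℕ, ball (u i) (ε / 2)) :=
          (measure_iUnion hdisj fun i => measurableSet_ball).symm
      _ ≤ μ (ball x₀ (2 * R)) := measure_mono hun
  exact ((hballs x₀ (2 * R) (by linarith)).2).not_ge htop

/-- The density property of a point `z` relative to a set `S`. -/
def GoodAt (μ : Measure X) (S : Set X) (z : X) : Prop :=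
  ∀ η : ℝ≥0∞, 0 < η → ∃ t : ℝ, 0 < t ∧ ∀ x : X, ∀ r : ℝ, 0 < r → r < t →
    z ∈ closedBall x r →
    (1 - η) * μ (closedBall x r) < μ (S ∩ closedBall x r)

lemma aux_good (μ : Measure X) [SecondCountableTopology X] [IsLocallyFiniteMeasure μ]
    [IsUnifLocDoublingMeasure μ] (hballs : BallsPosFinite μ) (S : Set X) :
    ∀ᵐ z ∂μ.restrict S, GoodAt μ S z := by
  filter_upwards [IsUnifLocDoublingMeasure.ae_tendsto_measure_inter_div μ S 1] with z hz
  intro η hη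
  set l : Filter {p : X × ℝ // z ∈ closedBall p.1 p.2} :=
    Filter.comap (fun p => p.1.2) (𝓝[>] (0:ℝ)) with hl
  have hten := hz (l := l) (fun p => p.1.1) (fun p => p.1.2) Filter.tendsto_comap
    (Filter.Eventually.of_forall fun p => by simpa using p.2)
  have hev : ∀ᶠ p in l,
      μ (S ∩ closedBall p.1.1 p.1.2) / μ (closedBall p.1.1 p.1.2) ∈ Ioi (1 - η) :=
    hten (Ioi_mem_nhds (ENNReal.sub_lt_self ENNReal.one_ne_top one_ne_zero hη.ne'))
  rw [hl, Filter.eventually_comap] at hev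
  rw [Filter.eventually_iff, mem_nhdsGT_iff_exists_Ioo_subset] at hev
  obtain ⟨t, ht, hsub⟩ := hev
  refine ⟨t, ht, fun x r hr hrt hzx => ?_⟩
  have hmem := hsub (show r ∈ Ioo (0:ℝ) t from ⟨hr, hrt⟩)
  have hp := hmem ⟨(x, r), hzx⟩ rfl
  have h0 : μ (closedBall x r) ≠ 0 :=
    ((hballs x r hr).1.trans_le (measure_mono ball_subset_closedBall)).ne'
  have htop : μ (closedBall x r) ≠ ∞ :=
    ((measure_mono (closedBall_subset_ball (by linarith))).trans_lt
      (hballs x (2 * r) (by linarith)).2).ne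
  exact (ENNReal.lt_div_iff_mul_lt (Or.inl h0) (Or.inl htop)).1 hp

lemma aux_small (μ : Measure X) {S D : Set X} (hS : MeasurableSet S) {x : X} {r : ℝ}
    (htop : μ (closedBall x r) ≠ ∞) {η : ℝ≥0∞} (hη1 : η ≤ 1)
    (hgood : (1 - η) * μ (closedBall x r) < μ (S ∩ closedBall x r))
    (hD : D ⊆ closedBall x r) (hDS : D ∩ S = ∅) :
    μ D ≤ η * μ (closedBall x r) := by
  have hsub : S ∩ closedBall x r ⊆ closedBall x r := inter_subset_right
  have hmeas : NullMeasurableSet (S ∩ closedBall x r) μ :=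
    (hS.inter measurableSet_closedBall).nullMeasurableSet
  have hfin : μ (S ∩ closedBall x r) ≠ ∞ := ((measure_mono hsub).trans_lt htop.lt_top).ne
  have hDsub : D ⊆ closedBall x r \ (S ∩ closedBall x r) := by
    intro y hy
    refine ⟨hD hy, fun hy2 => ?_⟩
    have hmem : y ∈ D ∩ S := ⟨hy, hy2.1⟩
    rw [hDS] at hmem
    exact hmem
  calc μ D ≤ μ (closedBall x r \ (S ∩ closedBall x r)) := measure_mono hDsub
    _ = μ (closedBall x r) - μ (S ∩ closedBall x r) := measure_diff hsub hmeas hfin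
    _ ≤ μ (closedBall x r) - (1 - η) * μ (closedBall x r) := tsub_le_tsub_left hgood.le _
    _ = (1 - (1 - η)) * μ (closedBall x r) := by
        conv_rhs => rw [ENNReal.sub_mul (fun _ _ => htop)]
        rw [one_mul]
    _ = η * μ (closedBall x r) := by rw [ENNReal.sub_sub_cancel ENNReal.one_ne_top hη1]

theorem statement11
    (μ : Measure X) [μ.Regular] (C₁ n : ℝ) (hC₁ : 1 < C₁) (hn : 0 < n)
    (hdoub : IsDoubling μ C₁ n) (hballs : BallsPosFinite μ)
    : ∀ u : X → ℝ, Measurable u →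
      ∃ E : Set X, μ E = 0 ∧
        ∀ z : X, z ∉ E → ∀ ε : ℝ, 0 < ε → ∃ δ : ℝ, 0 < δ ∧
          ∀ (x : X) (r : ℝ), 0 < r → z ∈ ball x r → μ (ball x r) < ENNReal.ofReal δ →
            |medianVal μ u (ball x r) - u z| < ε := by
  haveI : TopologicalSpace.SeparableSpace X := aux_separable μ C₁ n hC₁ hn hdoub hballs
  haveI : SecondCountableTopology X := UniformSpace.secondCountable_of_separable X
  haveI : IsLocallyFiniteMeasure μ :=
    ⟨fun x => ⟨ball x 1, ball_mem_nhds x one_pos, (hballs x 1 one_pos).2⟩⟩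
  haveI : IsUnifLocDoublingMeasure μ := by
    refine ⟨⟨(C₁ * 6 ^ n).toNNReal, ?_⟩⟩
    filter_upwards [self_mem_nhdsWithin] with ε hε
    have hε' : (0:ℝ) < ε := hε
    intro x
    have h1 : closedBall x (2 * ε) ⊆ ball x (3 * ε) := closedBall_subset_ball (by linarith)
    have h2 : ball x (ε / 2) ⊆ closedBall x ε :=
      (ball_subset_ball (by linarith)).trans ball_subset_closedBall
    have h3 := aux_doubling_le hC₁ hn hdoub x (show 0 < ε / 2 by linarith)
      (show ε / 2 < 3 * ε by linarith)
    have he : 3 * ε / (ε / 2) = 6 := by field_simp; ring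
    rw [he] at h3
    calc μ (closedBall x (2 * ε)) ≤ μ (ball x (3 * ε)) := measure_mono h1
      _ ≤ ENNReal.ofReal (C₁ * 6 ^ n) * μ (ball x (ε / 2)) := h3
      _ ≤ ↑(C₁ * 6 ^ n).toNNReal * μ (closedBall x ε) :=
          mul_le_mul' (le_of_eq rfl) (measure_mono h2)
  intro u hu
  set A : ℚ → Set X := fun q => {y | u y < (q:ℝ)} with hA
  set A' : ℚ → Set X := fun q => {y | (q:ℝ) ≤ u y} with hA'
  have hAm : ∀ q, MeasurableSet (A q) := fun q => measurableSet_lt hu measurable_const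
  have hA'm : ∀ q, MeasurableSet (A' q) := fun q => measurableSet_le measurable_const hu
  set N : ℚ → Set X := fun q => {z | ¬ GoodAt μ (A q) z} ∩ A q with hNdef
  set N' : ℚ → Set X := fun q => {z | ¬ GoodAt μ (A' q) z} ∩ A' q with hN'def
  have hN : ∀ q, μ (N q) = 0 := by
    intro q
    have h := ae_iff.1 (aux_good μ hballs (A q))
    rwa [Measure.restrict_apply' (hAm q)] at h
  have hN' : ∀ q, μ (N' q) = 0 := by
    intro q
    have h := ae_iff.1 (aux_good μ hballs (A' q))
    rwa [Measure.restrict_apply' (hA'm q)] at h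
  refine ⟨(⋃ q : ℚ, N q) ∪ (⋃ q : ℚ, N' q),
    measure_union_null (measure_iUnion_null hN) (measure_iUnion_null hN'), ?_⟩
  intro z hz ε hε
  obtain ⟨q₁, hq₁a, hq₁b⟩ := exists_rat_btwn (show u z - ε < u z by linarith)
  obtain ⟨q₂, hq₂a, hq₂b⟩ := exists_rat_btwn (show u z < u z + ε by linarith)
  have hzA' : z ∈ A' q₁ := le_of_lt hq₁b
  have hzA : z ∈ A q₂ := hq₂a
  have hg1 : GoodAt μ (A' q₁) z := by
    by_contra hg
    exact hz (Or.inr (mem_iUnion.2 ⟨q₁, hg, hzA'⟩))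
  have hg2 : GoodAt μ (A q₂) z := by
    by_contra hg
    exact hz (Or.inl (mem_iUnion.2 ⟨q₂, hg, hzA⟩))
  set K : ℝ≥0∞ := ENNReal.ofReal (C₁ * 2 ^ n) with hK
  have h2n : (1:ℝ) ≤ 2 ^ n := Real.one_le_rpow (by norm_num) hn.le
  have hKpos : 0 < C₁ * 2 ^ n := by nlinarith
  have hK0 : K ≠ 0 := (ENNReal.ofReal_pos.2 hKpos).ne'
  have hKtop : K ≠ ∞ := ENNReal.ofReal_ne_top
  have hK1 : 1 ≤ K := by
    rw [hK, ← ENNReal.ofReal_one]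
    exact ENNReal.ofReal_le_ofReal (by nlinarith)
  set η : ℝ≥0∞ := (4 * K)⁻¹ with hη
  have hηpos : 0 < η := ENNReal.inv_pos.2 (ENNReal.mul_ne_top (by norm_num) hKtop)
  have hη1 : η ≤ 1 := by
    rw [hη]
    refine ENNReal.inv_le_one.2 ?_
    calc (1:ℝ≥0∞) ≤ 4 := by norm_num
      _ ≤ 4 * K := le_mul_of_one_le_right (by norm_num) hK1
  have hηK : η * K = 4⁻¹ := by
    rw [hη, ENNReal.mul_inv (Or.inl (by norm_num)) (Or.inl (by norm_num)), mul_assoc,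
      ENNReal.inv_mul_cancel hK0 hKtop, mul_one]
  obtain ⟨t₁, ht₁, hG1⟩ := hg1 η hηpos
  obtain ⟨t₂, ht₂, hG2⟩ := hg2 η hηpos
  set t : ℝ := min t₁ t₂ with htdef
  have ht : 0 < t := lt_min ht₁ ht₂
  set m : ℝ≥0∞ := μ (ball z (t / 2)) / K with hm
  have hm0 : m ≠ 0 := (ENNReal.div_pos (hballs z (t / 2) (by linarith)).1.ne' hKtop).ne'
  have hmtop : m ≠ ∞ := by
    rw [hm]
    exact (ENNReal.div_lt_top (hballs z (t / 2) (by linarith)).2.ne hK0).ne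
  refine ⟨m.toReal, ENNReal.toReal_pos hm0 hmtop, fun x r hr hzr hsmall => ?_⟩
  rw [ENNReal.ofReal_toReal hmtop] at hsmall
  have hdoub2 : μ (ball x (2 * r)) ≤ K * μ (ball x r) := by
    have hle := aux_doubling_le hC₁ hn hdoub x hr (show r < 2 * r by linarith)
    have h2 : 2 * r / r = 2 := by field_simp
    rwa [h2] at hle
  have hrt : r < t / 2 := by
    by_contra hge
    push_neg at hge
    have hsub : ball z (t / 2) ⊆ ball x (2 * r) := by
      intro y hy
      rw [mem_ball] at hy ⊢
      have h1 := dist_triangle y z x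
      have h2 := mem_ball.1 hzr
      linarith
    have hmle : m ≤ μ (ball x r) := by
      rw [hm, ENNReal.div_le_iff hK0 hKtop]
      calc μ (ball z (t / 2)) ≤ μ (ball x (2 * r)) := measure_mono hsub
        _ ≤ K * μ (ball x r) := hdoub2
        _ = μ (ball x r) * K := mul_comm _ _
    exact absurd hsmall (not_lt.2 hmle)
  have hrtt : r < t := by linarith
  have hzcB : z ∈ closedBall x r := ball_subset_closedBall hzr
  have hM0 : μ (ball x r) ≠ 0 := (hballs x r hr).1.ne'
  have hMtop : μ (ball x r) ≠ ∞ := (hballs x r hr).2.ne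
  have hcBtop : μ (closedBall x r) ≠ ∞ :=
    ((measure_mono (closedBall_subset_ball (by linarith))).trans_lt
      (hballs x (2 * r) (by linarith)).2).ne
  have hcBle : μ (closedBall x r) ≤ K * μ (ball x r) :=
    (measure_mono (closedBall_subset_ball (by linarith))).trans hdoub2
  have hgood1 := hG1 x r hr (lt_of_lt_of_le hrtt (min_le_left _ _)) hzcB
  have hgood2 := hG2 x r hr (lt_of_lt_of_le hrtt (min_le_right _ _)) hzcB
  have hquarter : ∀ D : Set X, μ D ≤ η * μ (closedBall x r) → μ D ≤ 4⁻¹ * μ (ball x r) := by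
    intro D hD
    calc μ D ≤ η * μ (closedBall x r) := hD
      _ ≤ η * (K * μ (ball x r)) := mul_le_mul_right hcBle η
      _ = (η * K) * μ (ball x r) := (mul_assoc _ _ _).symm
      _ = 4⁻¹ * μ (ball x r) := by rw [hηK]
  have hD1 : μ (ball x r ∩ A q₁) ≤ 4⁻¹ * μ (ball x r) := by
    refine hquarter _ (aux_small μ (hA'm q₁) hcBtop hη1 hgood1
      (inter_subset_left.trans ball_subset_closedBall) ?_)
    ext y
    simp only [hA, hA', mem_inter_iff, mem_setOf_eq, mem_empty_iff_false, iff_false]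
    rintro ⟨⟨-, h1⟩, h2⟩
    linarith
  have hD2 : μ (ball x r ∩ A' q₂) ≤ 4⁻¹ * μ (ball x r) := by
    refine hquarter _ (aux_small μ (hAm q₂) hcBtop hη1 hgood2
      (inter_subset_left.trans ball_subset_closedBall) ?_)
    ext y
    simp only [hA, hA', mem_inter_iff, mem_setOf_eq, mem_empty_iff_false, iff_false]
    rintro ⟨⟨-, h1⟩, h2⟩
    linarith
  set T : Set ℝ := {a : ℝ | μ {x_1 ∈ ball x r | u x_1 < a} ≤ μ (ball x r) / 2} with hT
  have hmed : medianVal μ u (ball x r) = sSup T := rfl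
  have hsepa : ∀ a : ℝ, {x_1 ∈ ball x r | u x_1 < a} = ball x r ∩ {y | u y < a} := fun a => rfl
  have hq₁T : (q₁:ℝ) ∈ T := by
    show μ _ ≤ μ (ball x r) / 2
    rw [hsepa]
    refine (le_trans (le_of_eq (by rw [hA])) hD1 : μ (ball x r ∩ {y | u y < (q₁:ℝ)}) ≤ _).trans ?_
    calc (4⁻¹ : ℝ≥0∞) * μ (ball x r) ≤ 2⁻¹ * μ (ball x r) :=
          mul_le_mul_left (by norm_num) _
      _ = μ (ball x r) / 2 := by rw [ENNReal.div_eq_inv_mul]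
  have hub : ∀ a ∈ T, a ≤ (q₂:ℝ) := by
    intro a ha
    by_contra hgt
    push_neg at hgt
    have hcover : ball x r ⊆ (ball x r ∩ {y | u y < a}) ∪ (ball x r ∩ A' q₂) := by
      intro y hy
      rcases lt_or_ge (u y) a with h | h
      · exact Or.inl ⟨hy, h⟩
      · exact Or.inr ⟨hy, by rw [hA']; exact le_trans hgt.le h⟩
    have hle : μ (ball x r) ≤ μ (ball x r) / 2 + 4⁻¹ * μ (ball x r) := by
      refine (measure_mono hcover).trans ((measure_union_le _ _).trans (add_le_add ?_ hD2))
      rw [← hsepa]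
      exact ha
    have h34 : μ (ball x r) / 2 + 4⁻¹ * μ (ball x r)
        = ((2:ℝ≥0∞)⁻¹ + 4⁻¹) * μ (ball x r) := by
      rw [ENNReal.div_eq_inv_mul, ← add_mul]
    have hfrac : ((2:ℝ≥0∞))⁻¹ + 4⁻¹ < 1 := by
      have h : ((2:ℝ≥0∞))⁻¹ + 4⁻¹ = (((2:ℝ≥0)⁻¹ + (4:ℝ≥0)⁻¹ : ℝ≥0) : ℝ≥0∞) := by
        push_cast
        norm_num
      rw [h, ← ENNReal.coe_one, ENNReal.coe_lt_coe, ← NNReal.coe_lt_coe]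
      push_cast
      norm_num
    have hlt : ((2:ℝ≥0∞)⁻¹ + 4⁻¹) * μ (ball x r) < 1 * μ (ball x r) :=
      ENNReal.mul_lt_mul_left hM0 hMtop hfrac
    rw [h34] at hle
    rw [one_mul] at hlt
    exact absurd hle (not_le.2 hlt)
  have hbdd : BddAbove T := ⟨q₂, hub⟩
  have h1 : (q₁:ℝ) ≤ sSup T := le_csSup hbdd hq₁T
  have h2 : sSup T ≤ (q₂:ℝ) := csSup_le ⟨q₁, hq₁T⟩ hub
  rw [hmed, abs_lt]
  constructor <;> linarith

end
end

section
/- Let (X,d,μ) be a metric measure space in which every ball has finite positive measure, and let σ∈(0,∞). Then for every ball B⊂X, every real-valued measurable function u, and every c∈ℝ: |m_u(B) − c| ≤ (2 ⨍_B |u(w)−c|^σ dμ(w))^{1/σ}. -/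
open MeasureTheory Metric Set ENNReal NNReal

noncomputable section

variable {X : Type*} [MetricSpace X] [MeasurableSpace X] [BorelSpace X]

open Filter Topology in
theorem statement12
    (μ : Measure X) [μ.Regular] (hballs : BallsPosFinite μ)
    (σ : ℝ) (hσ : 0 < σ) :
    ∀ (x : X) (r : ℝ), 0 < r → ∀ u : X → ℝ, Measurable u → ∀ c : ℝ,
      ENNReal.ofReal |medianVal μ u (ball x r) - c| ≤
        (2 * ⨍⁻ w in ball x r, ENNReal.ofReal |u w - c| ^ σ ∂μ) ^ (1 / σ) := by
  intro x r hr u hu c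
  obtain ⟨hB0, hBfin⟩ := hballs x r hr
  set B := ball x r with hBdef
  set S : Set ℝ := {a : ℝ | μ ({x ∈ B | u x < a}) ≤ μ B / 2} with hSdef
  have hmeas : ∀ a : ℝ, MeasurableSet {x ∈ B | u x < a} := fun a =>
    measurableSet_ball.inter (hu measurableSet_Iio)
  have hsub : ∀ {a b : ℝ}, a ≤ b → {x ∈ B | u x < a} ⊆ {x ∈ B | u x < b} :=
    fun hab y hy => ⟨hy.1, hy.2.trans_le hab⟩
  have hSmono : ∀ {a b : ℝ}, b ∈ S → a ≤ b → a ∈ S := fun hb hab =>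
    le_trans (measure_mono (hsub hab)) hb
  have hhalfpos : 0 < μ B / 2 := ENNReal.div_pos hB0.ne' (by norm_num)
  -- S is nonempty
  have hne : S.Nonempty := by
    have htend : Tendsto (fun n : ℕ => μ {x ∈ B | u x < -(n : ℝ)}) atTop (𝓝 0) := by
      have h1 := tendsto_measure_iInter_atTop (μ := μ)
        (s := fun n : ℕ => {x ∈ B | u x < -(n : ℝ)})
        (fun n => (hmeas _).nullMeasurableSet)
        (fun n k hnk => hsub (neg_le_neg (Nat.cast_le.mpr hnk)))
        ⟨0, ((measure_mono (fun y hy => hy.1)).trans_lt hBfin).ne⟩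
      have h2 : (⋂ n : ℕ, {x ∈ B | u x < -(n : ℝ)}) = ∅ := by
        ext y
        simp only [mem_iInter, mem_empty_iff_false, iff_false, not_forall]
        obtain ⟨n, hn⟩ := exists_nat_ge (-(u y))
        exact ⟨n, fun hy => absurd hy.2 (by linarith)⟩
      rw [h2, measure_empty] at h1
      exact h1
    obtain ⟨n, hn⟩ := (htend.eventually_lt_const hhalfpos).exists
    exact ⟨-(n : ℝ), hn.le⟩
  -- S is bounded above
  have hbdd : BddAbove S := by
    have hun : (⋃ n : ℕ, {x ∈ B | u x < (n : ℝ)}) = B := by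
      ext y
      simp only [mem_iUnion, mem_setOf_eq]
      constructor
      · rintro ⟨n, hn, _⟩; exact hn
      · intro hy; obtain ⟨n, hn⟩ := exists_nat_gt (u y); exact ⟨n, hy, hn⟩
    have hmono : Monotone (fun n : ℕ => {x ∈ B | u x < (n : ℝ)}) :=
      fun n m hnm => hsub (by exact_mod_cast hnm)
    have htend : Tendsto (fun n : ℕ => μ {x ∈ B | u x < (n : ℝ)}) atTop (𝓝 (μ B)) := by
      have := hmono.measure_iUnion (μ := μ)
      rw [hun] at this
      rw [this]
      exact tendsto_atTop_iSup fun n m hnm => measure_mono (hmono hnm)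
    have hlt : μ B / 2 < μ B := ENNReal.half_lt_self hB0.ne' hBfin.ne
    obtain ⟨n, hn⟩ := (htend.eventually_const_lt hlt).exists
    refine ⟨n, fun a ha => ?_⟩
    by_contra hna
    push_neg at hna
    exact absurd (hSmono ha hna.le) (not_le.mpr hn)
  set m : ℝ := sSup S with hmdef
  have hmed : medianVal μ u B = m := rfl
  -- m ∈ S (left continuity)
  have hmS : μ {x ∈ B | u x < m} ≤ μ B / 2 := by
    have hun : {x ∈ B | u x < m} = ⋃ n : ℕ, {x ∈ B | u x < m - 1 / (n + 1)} := by
      ext y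
      simp only [mem_iUnion, mem_setOf_eq]
      constructor
      · rintro ⟨hy, hlt⟩
        obtain ⟨n, hn⟩ := exists_nat_one_div_lt (sub_pos.mpr hlt)
        exact ⟨n, hy, by linarith⟩
      · rintro ⟨n, hy, hlt⟩
        have : (0:ℝ) < 1 / (n + 1) := by positivity
        exact ⟨hy, by linarith⟩
    rw [hun, Monotone.measure_iUnion (fun n k hnk => hsub (by
      have hnk' : (n:ℝ) ≤ k := Nat.cast_le.mpr hnk
      have : (1:ℝ) / (k + 1) ≤ 1 / (n + 1) :=
        one_div_le_one_div_of_le (by positivity) (by linarith)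
      linarith))]
    refine iSup_le fun n => ?_
    have hlt : m - 1 / (n + 1) < m := by
      have : (0:ℝ) < 1 / (n + 1) := by positivity
      linarith
    obtain ⟨a, haS, ha⟩ := exists_lt_of_lt_csSup hne hlt
    exact le_trans (measure_mono (hsub ha.le)) haS
  -- right continuity: μ {u ≤ m} ≥ μ B / 2
  have hmLe : μ B / 2 ≤ μ {x ∈ B | u x ≤ m} := by
    have hin : {x ∈ B | u x ≤ m} = ⋂ n : ℕ, {x ∈ B | u x < m + 1 / (n + 1)} := by
      ext y
      simp only [mem_iInter, mem_setOf_eq]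
      constructor
      · rintro ⟨hy, hle⟩ n
        have : (0:ℝ) < 1 / (n + 1) := by positivity
        exact ⟨hy, by linarith⟩
      · intro h
        refine ⟨(h 0).1, ?_⟩
        by_contra hlt
        push_neg at hlt
        obtain ⟨n, hn⟩ := exists_nat_one_div_lt (sub_pos.mpr hlt)
        exact absurd (h n).2 (by linarith)
    have hanti : Antitone (fun n : ℕ => {x ∈ B | u x < m + 1 / (n + 1)}) := by
      intro n k hnk
      apply hsub
      have hnk' : (n:ℝ) ≤ k := Nat.cast_le.mpr hnk
      have : (1:ℝ) / (k + 1) ≤ 1 / (n + 1) :=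
        one_div_le_one_div_of_le (by positivity) (by linarith)
      linarith
    rw [hin, hanti.measure_iInter (fun n => (hmeas _).nullMeasurableSet)
      ⟨0, ((measure_mono (fun y hy => hy.1)).trans_lt hBfin).ne⟩]
    refine le_iInf fun n => ?_
    have hnotS : m + 1 / (n + 1) ∉ S := fun hS =>
      absurd (le_csSup hbdd hS) (by
        have : (0:ℝ) < 1 / (n + 1) := by positivity
        linarith)
    exact (not_le.mp hnotS).le
  -- choose the good half A
  obtain ⟨A, hAmeas, hAsub, hAhalf, hAbd⟩ :
      ∃ A : Set X, MeasurableSet A ∧ A ⊆ B ∧ μ B / 2 ≤ μ A ∧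
        ∀ w ∈ A, |m - c| ≤ |u w - c| := by
    rcases le_total c m with h | h
    · refine ⟨{x ∈ B | m ≤ u x}, measurableSet_ball.inter (hu measurableSet_Ici),
        fun y hy => hy.1, ?_, ?_⟩
      · have hsplit : μ B ≤ μ {x ∈ B | u x < m} + μ {x ∈ B | m ≤ u x} := by
          refine le_trans (measure_mono ?_) (measure_union_le _ _)
          intro y hy
          rcases lt_or_ge (u y) m with h' | h'
          · exact Or.inl ⟨hy, h'⟩
          · exact Or.inr ⟨hy, h'⟩
        have h1 : μ B ≤ μ B / 2 + μ {x ∈ B | m ≤ u x} :=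
          hsplit.trans (add_le_add_left hmS _)
        have h2 : μ B - μ B / 2 ≤ μ {x ∈ B | m ≤ u x} := tsub_le_iff_left.mpr h1
        rwa [ENNReal.sub_half hBfin.ne] at h2
      · intro w hw
        rw [abs_of_nonneg (sub_nonneg.mpr h), abs_of_nonneg (sub_nonneg.mpr (h.trans hw.2))]
        linarith [hw.2]
    · refine ⟨{x ∈ B | u x ≤ m}, measurableSet_ball.inter (hu measurableSet_Iic),
        fun y hy => hy.1, hmLe, ?_⟩
      intro w hw
      rw [abs_of_nonpos (sub_nonpos.mpr h), abs_of_nonpos (sub_nonpos.mpr (hw.2.trans h))]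
      linarith [hw.2]
  -- main estimate
  set I : ℝ≥0∞ := ∫⁻ w in B, ENNReal.ofReal |u w - c| ^ σ ∂μ with hIdef
  have hlow : ENNReal.ofReal |m - c| ^ σ * (μ B / 2) ≤ I := by
    calc ENNReal.ofReal |m - c| ^ σ * (μ B / 2)
        ≤ ENNReal.ofReal |m - c| ^ σ * μ A := by gcongr
      _ = ∫⁻ _ in A, ENNReal.ofReal |m - c| ^ σ ∂μ := (setLIntegral_const _ _).symm
      _ ≤ ∫⁻ w in A, ENNReal.ofReal |u w - c| ^ σ ∂μ := by
          refine setLIntegral_mono (by fun_prop) fun w hw => ?_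
          exact ENNReal.rpow_le_rpow (ENNReal.ofReal_le_ofReal (hAbd w hw)) hσ.le
      _ ≤ I := lintegral_mono_set hAsub
  have hpow : ENNReal.ofReal |m - c| ^ σ ≤ 2 * ⨍⁻ w in B, ENNReal.ofReal |u w - c| ^ σ ∂μ := by
    rw [setLAverage_eq]
    rw [div_eq_mul_inv, ← mul_assoc, ← div_eq_mul_inv]
    rw [ENNReal.le_div_iff_mul_le (Or.inl hB0.ne') (Or.inl hBfin.ne)]
    calc ENNReal.ofReal |m - c| ^ σ * μ B
        = 2 * (ENNReal.ofReal |m - c| ^ σ * (μ B / 2)) := by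
          rw [← mul_assoc, mul_comm (2:ℝ≥0∞), mul_assoc, ENNReal.mul_div_cancel' (by norm_num) (by norm_num)]
      _ ≤ 2 * I := by gcongr
  calc ENNReal.ofReal |medianVal μ u B - c|
      = (ENNReal.ofReal |m - c| ^ σ) ^ (1/σ) := by
        rw [hmed, ← ENNReal.rpow_mul, mul_one_div_cancel hσ.ne', ENNReal.rpow_one]
    _ ≤ (2 * ⨍⁻ w in B, ENNReal.ofReal |u w - c| ^ σ ∂μ) ^ (1/σ) :=
        ENNReal.rpow_le_rpow hpow (by positivity)


end
end
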